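/- arXiv:1111.1901 — 5 statements merged into one kernel-verified Lean document; each statement's English description precedes it below -/
import Mathlib

section
/- For the Wigner link function L_W and any Catalan word w of length 2t, lim_{n→∞} #Π*_{L_W,n}(w)/n^{t+1} = 1. -/
open Filter Topology

/-- A word `w` of length `h` (a function from positions to letters) is
pair-matched if every letter occurs exactly twice. -/
def PairMatched {h : ℕ} (w : Fin h → ℕ) : Prop :=
  ∀ i, (Finset.univ.filter fun j => w j = w i).card = 2

/-- A word is reducible to the empty word by successively removing adjacent
double letters. -/
inductive CatalanReducible : List ℕ → Prop
  | nil : CatalanReducible []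
  | step (l₁ l₂ : List ℕ) (a : ℕ) :
      CatalanReducible (l₁ ++ l₂) → CatalanReducible (l₁ ++ a :: a :: l₂)

/-- A word (as a function) is Catalan if its list of letters is reducible to
the empty word by successive removal of adjacent double letters. -/
def CatalanWord {h : ℕ} (w : Fin h → ℕ) : Prop := CatalanReducible (List.ofFn w)

/-- `Π*_{L_T,n}(w)`: circuits `π : {0,…,2t} → {1,…,n}` (coded by `Fin n`) with
`π(0) = π(2t)` such that matching letters of `w` force equal absolute
increments `|π(i−1) − π(i)|`. -/
def toepStar (t n : ℕ) (w : Fin (2 * t) → ℕ) : Set (Fin (2 * t + 1) → Fin n) :=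
  {π | π 0 = π (Fin.last (2 * t)) ∧ ∀ i j : Fin (2 * t), w i = w j →
    ((π i.castSucc : ℤ) - (π i.succ : ℤ)).natAbs
      = ((π j.castSucc : ℤ) - (π j.succ : ℤ)).natAbs}

/-- `Π*_{L_W,n}(w)`: circuits with `π(0) = π(2t)` such that matching letters of
`w` force equal Wigner link values `(min, max)` of consecutive entries. -/
def wignerStar (t n : ℕ) (w : Fin (2 * t) → ℕ) : Set (Fin (2 * t + 1) → Fin n) :=
  {π | π 0 = π (Fin.last (2 * t)) ∧ ∀ i j : Fin (2 * t), w i = w j →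
    (min (π i.castSucc) (π i.succ), max (π i.castSucc) (π i.succ))
      = (min (π j.castSucc) (π j.succ), max (π j.castSucc) (π j.succ))}

/-- Position `i` is a generating vertex of `w`: the first occurrence of its letter. -/
def IsGen {h : ℕ} (w : Fin h → ℕ) (i : Fin h) : Prop := ∀ j, w j = w i → i ≤ j

/-- `Π*_{L_T,n,l}(w)`: circuits in `Π*_{L_T,n}(w)` such that for every
generating vertex `i` with matching position `j`,
`π(i−1) − π(i) = l_i · (π(j−1) − π(j))`. -/
def toepStarSigned (t n : ℕ) (w : Fin (2 * t) → ℕ) (l : Fin (2 * t) → ℤ) :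
    Set (Fin (2 * t + 1) → Fin n) :=
  {π | π ∈ toepStar t n w ∧ ∀ i j : Fin (2 * t), IsGen w i → i ≠ j → w j = w i →
    (π i.castSucc : ℤ) - (π i.succ : ℤ) = l i * ((π j.castSucc : ℤ) - (π j.succ : ℤ))}

set_option maxHeartbeats 1000000

section WignerAux

private lemma min_max_eq' {α : Type*} [LinearOrder α] {x y z : α}
    (h1 : min x y = min y z) (h2 : max x y = max y z) : x = z := by
  rcases le_total x y with hxy | hxy <;> rcases le_total y z with hyz | hyz
  · rw [min_eq_left hxy, min_eq_left hyz] at h1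
    rw [max_eq_right hxy, max_eq_right hyz] at h2
    exact h1.trans h2
  · rwa [min_eq_left hxy, min_eq_right hyz] at h1
  · rwa [max_eq_left hxy, max_eq_right hyz] at h2
  · rw [min_eq_right hxy, min_eq_right hyz] at h1
    rw [max_eq_left hxy, max_eq_left hyz] at h2
    exact h2.trans h1

private def iotaFun (t k : ℕ) : Fin (2*t) → Fin (2*(t+1)) :=
  fun i => ⟨if i.val < k then i.val else i.val + 2, by have := i.isLt; split <;> omega⟩

private def embFun (t k : ℕ) : Fin (2*t+1) → Fin (2*(t+1)+1) :=
  fun m => ⟨if m.val ≤ k then m.val else m.val + 2, by have := m.isLt; split <;> omega⟩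

private def backFun (t k n : ℕ) (hk : k ≤ 2*t) (c : Fin n) (ρ : Fin (2*t+1) → Fin n) :
    Fin (2*(t+1)+1) → Fin n := fun p =>
  if _ : p.val ≤ k then ρ ⟨p.val, by omega⟩
  else if p.val = k+1 then c
  else if p.val = k+2 then ρ ⟨k, by omega⟩
  else ρ ⟨p.val - 2, by have := p.isLt; omega⟩

private lemma backFun_le (t k n : ℕ) (hk : k ≤ 2*t) (c : Fin n) (ρ : Fin (2*t+1) → Fin n)
    (p : Fin (2*(t+1)+1)) (hp : p.val ≤ k) :
    backFun t k n hk c ρ p = ρ ⟨p.val, by omega⟩ := by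
  simp [backFun, hp]

private lemma backFun_k1 (t k n : ℕ) (hk : k ≤ 2*t) (c : Fin n) (ρ : Fin (2*t+1) → Fin n)
    (p : Fin (2*(t+1)+1)) (hp : p.val = k+1) :
    backFun t k n hk c ρ p = c := by
  rw [backFun, dif_neg (by omega), if_pos hp]

private lemma backFun_k2 (t k n : ℕ) (hk : k ≤ 2*t) (c : Fin n) (ρ : Fin (2*t+1) → Fin n)
    (p : Fin (2*(t+1)+1)) (hp : p.val = k+2) :
    backFun t k n hk c ρ p = ρ ⟨k, by omega⟩ := by
  rw [backFun, dif_neg (by omega), if_neg (by omega), if_pos hp]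

private lemma backFun_gt (t k n : ℕ) (hk : k ≤ 2*t) (c : Fin n) (ρ : Fin (2*t+1) → Fin n)
    (p : Fin (2*(t+1)+1)) (hp : k+2 < p.val) :
    backFun t k n hk c ρ p = ρ ⟨p.val - 2, by have := p.isLt; omega⟩ := by
  rw [backFun, dif_neg (by omega), if_neg (by omega), if_neg (by omega)]

private lemma step_count (t n : ℕ) (w : Fin (2*(t+1)) → ℕ) (w' : Fin (2*t) → ℕ)
    (k : ℕ) (hk : k ≤ 2*t) (a : ℕ) (hklt : k < 2*(t+1)) (hklt1 : k+1 < 2*(t+1))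
    (ha1 : w ⟨k, hklt⟩ = a) (ha2 : w ⟨k+1, hklt1⟩ = a)
    (haonly : ∀ p : Fin (2*(t+1)), w p = a → p.val = k ∨ p.val = k+1)
    (hwι : ∀ i : Fin (2*t), w' i = w (iotaFun t k i)) :
    (wignerStar (t+1) n w).ncard = n * (wignerStar t n w').ncard := by
  have hkp : k < 2*(t+1)+1 := by omega
  have hk1p : k+1 < 2*(t+1)+1 := by omega
  have hk2p : k+2 < 2*(t+1)+1 := by omega
  -- basic positional facts
  have hwk : ∀ p : Fin (2*(t+1)), p.val = k → w p = a := by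
    intro p hp
    have : p = ⟨k, hklt⟩ := Fin.ext hp
    rw [this]; exact ha1
  have hwk1 : ∀ p : Fin (2*(t+1)), p.val = k+1 → w p = a := by
    intro p hp
    have : p = ⟨k+1, hklt1⟩ := Fin.ext hp
    rw [this]; exact ha2
  have hιne : ∀ i' : Fin (2*t), (iotaFun t k i').val ≠ k ∧ (iotaFun t k i').val ≠ k+1 := by
    intro i'
    simp only [iotaFun]
    split <;> omega
  -- the adjacent constraint
  have hadj : ∀ π ∈ wignerStar (t+1) n w,
      π ⟨k, hkp⟩ = π ⟨k+2, hk2p⟩ := by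
    intro π hπ
    have h := hπ.2 ⟨k, hklt⟩ ⟨k+1, hklt1⟩ (ha1.trans ha2.symm)
    have h1 := congrArg Prod.fst h
    have h2 := congrArg Prod.snd h
    simp only [Fin.castSucc_mk, Fin.succ_mk] at h1 h2
    exact min_max_eq' h1 h2
  -- edge transfer lemmas for the forward map
  have hs1 : ∀ (π : Fin (2*(t+1)+1) → Fin n) (i : Fin (2*t)),
      π (embFun t k i.succ) = π ((iotaFun t k i).succ) := by
    intro π i
    congr 1
    apply Fin.ext
    simp only [embFun, iotaFun, Fin.val_succ]
    split_ifs <;> omega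
  have hc1 : ∀ π ∈ wignerStar (t+1) n w, ∀ i : Fin (2*t),
      π (embFun t k i.castSucc) = π ((iotaFun t k i).castSucc) := by
    intro π hπ i
    by_cases hik : i.val = k
    · rw [show embFun t k i.castSucc = ⟨k, hkp⟩ from
        Fin.ext (by simp [embFun, hik])]
      rw [show (iotaFun t k i).castSucc = ⟨k+2, hk2p⟩ from
        Fin.ext (by simp [iotaFun, hik])]
      exact hadj π hπ
    · congr 1
      apply Fin.ext
      simp only [embFun, iotaFun, Fin.coe_castSucc]
      split_ifs <;> omega
  -- forward membership
  have hmem1 : ∀ π, π ∈ wignerStar (t+1) n w →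
      (fun m => π (embFun t k m)) ∈ wignerStar t n w' := by
    intro π hπ
    simp only [wignerStar, Set.mem_setOf_eq]
    constructor
    · show π (embFun t k 0) = π (embFun t k (Fin.last (2*t)))
      have h0 : embFun t k 0 = 0 := Fin.ext (by simp [embFun])
      rw [h0]
      by_cases hkt : k = 2*t
      · rw [show embFun t k (Fin.last (2*t)) = ⟨k, hkp⟩ from
          Fin.ext (by simp [embFun, Fin.last, hkt])]
        rw [hadj π hπ]
        rw [show (⟨k+2, hk2p⟩ : Fin (2*(t+1)+1)) = Fin.last (2*(t+1)) from
          Fin.ext (by simp [Fin.last]; omega)]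
        exact hπ.1
      · rw [show embFun t k (Fin.last (2*t)) = Fin.last (2*(t+1)) from
          Fin.ext (by simp [embFun, Fin.last]; split <;> omega)]
        exact hπ.1
    · intro i j hij
      show (min (π (embFun t k i.castSucc)) (π (embFun t k i.succ)),
            max (π (embFun t k i.castSucc)) (π (embFun t k i.succ)))
          = (min (π (embFun t k j.castSucc)) (π (embFun t k j.succ)),
            max (π (embFun t k j.castSucc)) (π (embFun t k j.succ)))
      rw [hc1 π hπ i, hc1 π hπ j, hs1 π i, hs1 π j]
      exact hπ.2 (iotaFun t k i) (iotaFun t k j) (by rw [← hwι i, ← hwι j]; exact hij)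
  -- backward membership
  have hmem2 : ∀ (c : Fin n) (ρ : Fin (2*t+1) → Fin n), ρ ∈ wignerStar t n w' →
      backFun t k n hk c ρ ∈ wignerStar (t+1) n w := by
    intro c ρ hρ
    -- edge values of the reconstructed circuit
    have hbc : ∀ i : Fin (2*t),
        backFun t k n hk c ρ ((iotaFun t k i).castSucc) = ρ i.castSucc := by
      intro i
      rcases lt_trichotomy i.val k with h | h | h
      · rw [backFun_le t k n hk c ρ _ (by simp [iotaFun, h]; omega)]
        congr 1; apply Fin.ext; simp [iotaFun, h]
      · rw [backFun_k2 t k n hk c ρ _ (by simp [iotaFun, h])]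
        congr 1; apply Fin.ext; simp [h]
      · have h' : ¬ (i.val < k) := by omega
        rw [backFun_gt t k n hk c ρ _ (by simp [iotaFun, h']; omega)]
        congr 1; apply Fin.ext; simp [iotaFun, h']
    have hbs : ∀ i : Fin (2*t),
        backFun t k n hk c ρ ((iotaFun t k i).succ) = ρ i.succ := by
      intro i
      by_cases h : i.val < k
      · rw [backFun_le t k n hk c ρ _ (by simp [iotaFun, h])]
        congr 1; apply Fin.ext; simp [iotaFun, h]
      · rw [backFun_gt t k n hk c ρ _ (by simp [iotaFun, h]; omega)]
        congr 1; apply Fin.ext; simp [iotaFun, h]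
    have hklt' : k < 2*t+1 := by omega
    have hkc : ∀ p : Fin (2*(t+1)), p.val = k →
        backFun t k n hk c ρ p.castSucc = ρ ⟨k, hklt'⟩ := by
      intro p hp
      rw [backFun_le t k n hk c ρ _ (by simp [hp])]
      congr 1; apply Fin.ext; simp [hp]
    have hks : ∀ p : Fin (2*(t+1)), p.val = k →
        backFun t k n hk c ρ p.succ = c := by
      intro p hp
      exact backFun_k1 t k n hk c ρ _ (by simp [hp])
    have hk1c : ∀ p : Fin (2*(t+1)), p.val = k+1 →
        backFun t k n hk c ρ p.castSucc = c := by
      intro p hp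
      exact backFun_k1 t k n hk c ρ _ (by simp [hp])
    have hk1s : ∀ p : Fin (2*(t+1)), p.val = k+1 →
        backFun t k n hk c ρ p.succ = ρ ⟨k, hklt'⟩ := by
      intro p hp
      exact backFun_k2 t k n hk c ρ _ (by simp [hp])
    have hclass : ∀ p : Fin (2*(t+1)),
        p.val = k ∨ p.val = k+1 ∨ ∃ p', iotaFun t k p' = p := by
      intro p
      by_cases h1 : p.val < k
      · exact Or.inr (Or.inr ⟨⟨p.val, by omega⟩, Fin.ext (by simp [iotaFun, h1])⟩)
      by_cases h2 : p.val = k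
      · exact Or.inl h2
      by_cases h3 : p.val = k+1
      · exact Or.inr (Or.inl h3)
      · refine Or.inr (Or.inr ⟨⟨p.val - 2, by have := p.isLt; omega⟩, Fin.ext ?_⟩)
        simp only [iotaFun]
        split <;> omega
    constructor
    · show backFun t k n hk c ρ 0 = backFun t k n hk c ρ (Fin.last (2*(t+1)))
      have hz : backFun t k n hk c ρ 0 = ρ 0 := by
        rw [backFun_le t k n hk c ρ 0 (by simp)]
        congr 1
      have hlast : backFun t k n hk c ρ (Fin.last (2*(t+1))) = ρ (Fin.last (2*t)) := by
        by_cases hkt : k = 2*t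
        · rw [backFun_k2 t k n hk c ρ _ (by simp [Fin.last]; omega)]
          congr 1; apply Fin.ext; simp [Fin.last, hkt]
        · rw [backFun_gt t k n hk c ρ _ (by simp [Fin.last]; omega)]
          congr 1
      rw [hz, hlast]
      exact hρ.1
    · intro i j hij
      rcases hclass i with hi | hi | ⟨i', hi'⟩
      · have hja : w j = a := by rw [← hij]; exact hwk i hi
        rcases haonly j hja with hj | hj
        · have hij2 : i = j := Fin.ext (hi.trans hj.symm)
          rw [hij2]
        · rw [hkc i hi, hks i hi, hk1c j hj, hk1s j hj]
          rw [min_comm, max_comm]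
      · have hja : w j = a := by rw [← hij]; exact hwk1 i hi
        rcases haonly j hja with hj | hj
        · rw [hk1c i hi, hk1s i hi, hkc j hj, hks j hj]
          rw [min_comm, max_comm]
        · have hij2 : i = j := Fin.ext (hi.trans hj.symm)
          rw [hij2]
      · rcases hclass j with hj | hj | ⟨j', hj'⟩
        · exfalso
          have hia : w i = a := by rw [hij]; exact hwk j hj
          rcases haonly i hia with h | h
          · exact (hιne i').1 (by rw [hi']; exact h)
          · exact (hιne i').2 (by rw [hi']; exact h)
        · exfalso
          have hia : w i = a := by rw [hij]; exact hwk1 j hj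
          rcases haonly i hia with h | h
          · exact (hιne i').1 (by rw [hi']; exact h)
          · exact (hιne i').2 (by rw [hi']; exact h)
        · rw [← hi', ← hj', hbc i', hbs i', hbc j', hbs j']
          exact hρ.2 i' j' (by rw [hwι i', hwι j', hi', hj']; exact hij)
  -- the bijection
  have e : (wignerStar (t+1) n w) ≃ (Fin n × (wignerStar t n w')) := by
    refine { toFun := fun π => (π.1 ⟨k+1, hk1p⟩,
               ⟨fun m => π.1 (embFun t k m), hmem1 π.1 π.2⟩),
             invFun := fun x => ⟨backFun t k n hk x.1 x.2.1, hmem2 x.1 x.2.1 x.2.2⟩,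
             left_inv := ?_, right_inv := ?_ }
    · rintro ⟨π, hπ⟩
      apply Subtype.ext
      show backFun t k n hk (π ⟨k+1, hk1p⟩) (fun m => π (embFun t k m)) = π
      funext p
      rcases lt_trichotomy p.val (k+1) with hp | hp | hp
      · rw [backFun_le t k n hk _ _ p (by omega)]
        show π (embFun t k ⟨p.val, by omega⟩) = π p
        congr 1; apply Fin.ext; simp [embFun]; omega
      · rw [backFun_k1 t k n hk _ _ p hp]
        congr 1; apply Fin.ext; simp [hp]
      · by_cases hp2 : p.val = k+2
        · rw [backFun_k2 t k n hk _ _ p hp2]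
          show π (embFun t k ⟨k, by omega⟩) = π p
          have he : embFun t k ⟨k, by omega⟩ = ⟨k, hkp⟩ := Fin.ext (by simp [embFun])
          rw [he, hadj π hπ]
          congr 1; apply Fin.ext; simp [hp2]
        · rw [backFun_gt t k n hk _ _ p (by omega)]
          show π (embFun t k ⟨p.val - 2, by have := p.isLt; omega⟩) = π p
          have h' : ¬ (p.val - 2 ≤ k) := by omega
          congr 1; apply Fin.ext; simp [embFun, h']; omega
    · rintro ⟨c, ρ, hρ⟩
      simp only [Prod.mk.injEq]
      constructor
      · exact backFun_k1 t k n hk c ρ _ (by simp)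
      · apply Subtype.ext
        funext m
        show backFun t k n hk c ρ (embFun t k m) = ρ m
        by_cases hm : m.val ≤ k
        · rw [backFun_le t k n hk c ρ _ (by simp [embFun, hm])]
          congr 1; apply Fin.ext; simp [embFun, hm]
        · rw [backFun_gt t k n hk c ρ _ (by simp [embFun, hm]; omega)]
          congr 1; apply Fin.ext; simp [embFun, hm]
  have hcard := Nat.card_congr e
  have hfin : Nat.card (Fin n) = n := by simp
  rw [Nat.card_prod, hfin] at hcard
  rw [← Nat.card_coe_set_eq, ← Nat.card_coe_set_eq]
  rw [hcard]

private lemma catalan_inv {L : List ℕ} (h : CatalanReducible L) :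
    L = [] ∨ ∃ l₁ l₂ b, L = l₁ ++ b :: b :: l₂ ∧ CatalanReducible (l₁ ++ l₂) := by
  cases h with
  | nil => exact Or.inl rfl
  | step l₁ l₂ b h => exact Or.inr ⟨l₁, l₂, b, rfl, h⟩

private lemma getElem_mid₀ (l₁ l₂ : List ℕ) (b : ℕ)
    (hp : l₁.length < (l₁ ++ b::b::l₂).length) :
    (l₁ ++ b::b::l₂)[l₁.length] = b := by
  rw [List.getElem_append_right (le_refl _)]
  simp

private lemma getElem_mid₁ (l₁ l₂ : List ℕ) (b : ℕ)
    (hp : l₁.length + 1 < (l₁ ++ b::b::l₂).length) :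
    (l₁ ++ b::b::l₂)[l₁.length + 1] = b := by
  rw [List.getElem_append_right (by omega)]
  have h : l₁.length + 1 - l₁.length = 1 := by omega
  simp [h]

private lemma getElem_left' (l₁ l₂ : List ℕ) (b : ℕ) (i : ℕ) (h : i < l₁.length)
    (h1 : i < (l₁ ++ b::b::l₂).length) (h2 : i < (l₁ ++ l₂).length) :
    (l₁ ++ b::b::l₂)[i] = (l₁ ++ l₂)[i] := by
  rw [List.getElem_append_left h, List.getElem_append_left h]

private lemma getElem_right' (l₁ l₂ : List ℕ) (b : ℕ) (i : ℕ) (hk : l₁.length ≤ i)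
    (h2 : i < (l₁ ++ l₂).length)
    (h1 : i + 2 < (l₁ ++ b::b::l₂).length) :
    (l₁ ++ b::b::l₂)[i+2] = (l₁ ++ l₂)[i] := by
  rw [List.getElem_append_right (by omega : l₁.length ≤ i + 2),
    List.getElem_append_right hk]
  have h3 : i + 2 - l₁.length = (i - l₁.length) + 1 + 1 := by omega
  simp [h3]

private lemma step_pm (t : ℕ) (w : Fin (2*(t+1)) → ℕ) (w' : Fin (2*t) → ℕ)
    (k : ℕ) (hk : k ≤ 2*t) (a : ℕ) (hklt : k < 2*(t+1)) (hklt1 : k+1 < 2*(t+1))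
    (ha1 : w ⟨k, hklt⟩ = a) (ha2 : w ⟨k+1, hklt1⟩ = a)
    (haonly : ∀ p : Fin (2*(t+1)), w p = a → p.val = k ∨ p.val = k+1)
    (hwι : ∀ i : Fin (2*t), w' i = w (iotaFun t k i))
    (hw : PairMatched w) : PairMatched w' := by
  have hwk : ∀ p : Fin (2*(t+1)), p.val = k → w p = a := by
    intro p hp
    have : p = ⟨k, hklt⟩ := Fin.ext hp
    rw [this]; exact ha1
  have hwk1 : ∀ p : Fin (2*(t+1)), p.val = k+1 → w p = a := by
    intro p hp
    have : p = ⟨k+1, hklt1⟩ := Fin.ext hp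
    rw [this]; exact ha2
  have hιne : ∀ i' : Fin (2*t), (iotaFun t k i').val ≠ k ∧ (iotaFun t k i').val ≠ k+1 := by
    intro i'
    simp only [iotaFun]
    split <;> omega
  intro i
  refine Eq.trans ?_ (hw (iotaFun t k i))
  apply Finset.card_bij (fun j _ => iotaFun t k j)
  · intro j hj
    simp only [Finset.mem_filter, Finset.mem_univ, true_and] at hj ⊢
    rw [← hwι j, ← hwι i]
    exact hj
  · intro j1 h1 j2 h2 hEq
    apply Fin.ext
    have h := congrArg Fin.val hEq
    simp only [iotaFun] at h
    split_ifs at h <;> omega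
  · intro p hp
    simp only [Finset.mem_filter, Finset.mem_univ, true_and] at hp
    have hia : w (iotaFun t k i) ≠ a := by
      intro h
      rcases haonly _ h with h' | h'
      · exact (hιne i).1 h'
      · exact (hιne i).2 h'
    have hpk : p.val ≠ k := fun h => hia (hp ▸ hwk p h)
    have hpk1 : p.val ≠ k+1 := fun h => hia (hp ▸ hwk1 p h)
    refine ⟨⟨if p.val < k then p.val else p.val - 2, by have := p.isLt; split <;> omega⟩,
      ?_, ?_⟩
    · have hικ : iotaFun t k ⟨if p.val < k then p.val else p.val - 2,
          by have := p.isLt; split <;> omega⟩ = p := by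
        apply Fin.ext
        simp only [iotaFun]
        split_ifs <;> omega
      simp only [Finset.mem_filter, Finset.mem_univ, true_and]
      rw [hwι, hwι, hικ, hp]
    · apply Fin.ext
      simp only [iotaFun]
      split_ifs <;> omega

private lemma wigner_count :
    ∀ (t n : ℕ) (w : Fin (2*t) → ℕ), PairMatched w → CatalanWord w →
      (wignerStar t n w).ncard = n^(t+1) := by
  intro t
  induction t with
  | zero =>
    intro n w _ _
    have h : wignerStar 0 n w = Set.univ := by
      ext π
      simp only [wignerStar, Set.mem_setOf_eq, Set.mem_univ, iff_true]
      exact ⟨rfl, fun i => i.elim0⟩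
    rw [h, Set.ncard_univ, Nat.card_eq_fintype_card]
    simp
  | succ t ih =>
    intro n w hw hc
    rcases catalan_inv hc with h0 | ⟨l₁, l₂, b, hL, hred⟩
    · exact absurd (congrArg List.length h0) (by simp)
    have hlen : l₁.length + l₂.length + 2 = 2*(t+1) := by
      have h := congrArg List.length hL
      simp [List.length_append] at h
      omega
    obtain ⟨k, hkdef⟩ : ∃ k, k = l₁.length := ⟨_, rfl⟩
    have hk : k ≤ 2*t := by omega
    have hklt : k < 2*(t+1) := by omega
    have hklt1 : k+1 < 2*(t+1) := by omega
    have hwval : ∀ (p : ℕ) (hp : p < 2*(t+1)) (hp' : p < (l₁ ++ b :: b :: l₂).length),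
        w ⟨p, hp⟩ = (l₁ ++ b :: b :: l₂)[p] := by
      intro p hp hp'
      have h1 : (List.ofFn w)[p]'(by rw [List.length_ofFn]; exact hp) = w ⟨p, hp⟩ := by rw [List.getElem_ofFn]
      rw [← h1]
      simp only [hL]
    have ha1 : w ⟨k, hklt⟩ = b := by
      rw [hwval k hklt (by simp only [List.length_append, List.length_cons]; omega)]
      simp only [hkdef]
      exact getElem_mid₀ l₁ l₂ b (by simp only [List.length_append, List.length_cons]; omega)
    have ha2 : w ⟨k+1, hklt1⟩ = b := by
      rw [hwval (k+1) hklt1 (by simp only [List.length_append, List.length_cons]; omega)]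
      simp only [hkdef]
      exact getElem_mid₁ l₁ l₂ b (by simp only [List.length_append, List.length_cons]; omega)
    obtain ⟨w', hw'⟩ : ∃ w' : Fin (2*t) → ℕ,
        ∀ i : Fin (2*t), w' i = (l₁ ++ l₂)[i.val]'(by simp only [List.length_append]; omega) :=
      ⟨fun i => (l₁ ++ l₂)[i.val]'(by simp only [List.length_append]; omega), fun i => rfl⟩
    have hwι : ∀ i : Fin (2*t), w' i = w (iotaFun t k i) := by
      intro i
      have hi1 : i.val < 2*(t+1) := by have := i.isLt; omega
      have hi2 : i.val + 2 < 2*(t+1) := by have := i.isLt; omega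
      rw [hw' i]
      by_cases h : i.val < k
      · rw [show iotaFun t k i = ⟨i.val, hi1⟩ from Fin.ext (by simp [iotaFun, h])]
        rw [hwval i.val hi1 (by simp only [List.length_append, List.length_cons]; omega)]
        exact (getElem_left' l₁ l₂ b i.val (by omega)
          (by simp only [List.length_append, List.length_cons]; omega)
          (by simp only [List.length_append]; omega)).symm
      · rw [show iotaFun t k i = ⟨i.val + 2, hi2⟩ from Fin.ext (by simp [iotaFun, h])]
        rw [hwval (i.val+2) hi2 (by simp only [List.length_append, List.length_cons]; omega)]
        exact (getElem_right' l₁ l₂ b i.val (by omega)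
          (by simp only [List.length_append]; omega)
          (by simp only [List.length_append, List.length_cons]; omega)).symm
    have haonly : ∀ p : Fin (2*(t+1)), w p = b → p.val = k ∨ p.val = k+1 := by
      intro p hp
      by_contra hcon
      push_neg at hcon
      have hsub : ({⟨k, hklt⟩, ⟨k+1, hklt1⟩, p} : Finset (Fin (2*(t+1)))) ⊆
          Finset.univ.filter (fun j => w j = w ⟨k, hklt⟩) := by
        intro x hx
        simp only [Finset.mem_insert, Finset.mem_singleton] at hx
        simp only [Finset.mem_filter, Finset.mem_univ, true_and]
        rcases hx with rfl | rfl | rfl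
        · rfl
        · rw [ha2, ha1]
        · rw [hp, ha1]
      have hcard3 : ({⟨k, hklt⟩, ⟨k+1, hklt1⟩, p} : Finset (Fin (2*(t+1)))).card = 3 := by
        rw [Finset.card_insert_of_notMem, Finset.card_insert_of_notMem,
          Finset.card_singleton]
        · simp only [Finset.mem_singleton, Fin.ext_iff]
          omega
        · simp only [Finset.mem_insert, Finset.mem_singleton, Fin.ext_iff, not_or]
          constructor <;> omega
      have hle := Finset.card_le_card hsub
      rw [hcard3, hw ⟨k, hklt⟩] at hle
      omega
    have hpm' : PairMatched w' := step_pm t w w' k hk b hklt hklt1 ha1 ha2 haonly hwι hw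
    have hcw' : CatalanWord w' := by
      show CatalanReducible (List.ofFn w')
      have hofn : List.ofFn w' = l₁ ++ l₂ := by
        apply List.ext_getElem
        · simp only [List.length_ofFn, List.length_append]
          omega
        · intro i h1 h2
          rw [List.getElem_ofFn, hw']
      rw [hofn]
      exact hred
    rw [step_count t n w w' k hk b hklt hklt1 ha1 ha2 haonly hwι, ih n w' hpm' hcw']
    ring

end WignerAux

/-- For any Catalan word `w` of length `2t`,
`#Π*_{L_W,n}(w)/n^{t+1} → 1` as `n → ∞`. -/
theorem wignerStar_catalan_limit (t : ℕ) (w : Fin (2 * t) → ℕ)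
    (hw : PairMatched w) (hc : CatalanWord w) :
    Tendsto (fun n : ℕ => ((wignerStar t n w).ncard : ℝ) / (n : ℝ) ^ (t + 1))
      atTop (nhds 1) := by
  have heq : (fun n : ℕ => ((wignerStar t n w).ncard : ℝ) / (n : ℝ) ^ (t + 1))
      =ᶠ[atTop] (fun _ => (1 : ℝ)) := by
    filter_upwards [eventually_ge_atTop 1] with n hn
    rw [wigner_count t n w hw hc]
    push_cast
    rw [div_self]
    exact pow_ne_zero _ (Nat.cast_ne_zero.2 (by omega))
  exact Tendsto.congr' heq.symm tendsto_const_nhds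
end

section
/- For the Wigner link function L_W and any pair-matched non-Catalan word w of length 2t, lim_{n→∞} #Π*_{L_W,n}(w)/n^{t+1} = 0. -/
open Filter Topology

lemma minmax_pair {α : Type*} [LinearOrder α] {a b c d : α}
    (h : (min a b, max a b) = (min c d, max c d)) :
    (a = c ∧ b = d) ∨ (a = d ∧ b = c) := by
  simp only [Prod.mk.injEq] at h
  obtain ⟨h1, h2⟩ := h
  rcases le_total a b with hab | hab <;> rcases le_total c d with hcd | hcd
  · rw [min_eq_left hab, min_eq_left hcd] at h1
    rw [max_eq_right hab, max_eq_right hcd] at h2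
    exact Or.inl ⟨h1, h2⟩
  · rw [min_eq_left hab, min_eq_right hcd] at h1
    rw [max_eq_right hab, max_eq_left hcd] at h2
    exact Or.inr ⟨h1, h2⟩
  · rw [min_eq_right hab, min_eq_left hcd] at h1
    rw [max_eq_left hab, max_eq_right hcd] at h2
    exact Or.inr ⟨h2, h1⟩
  · rw [min_eq_right hab, min_eq_right hcd] at h1
    rw [max_eq_left hab, max_eq_left hcd] at h2
    exact Or.inl ⟨h2, h1⟩

lemma key' (t : ℕ) : ∀ (n : ℕ) (w : ℕ → ℕ) (π : ℕ → Fin n),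
    (∀ i < 2*t, ((Finset.range (2*t)).filter fun k => w k = w i).card = 2) →
    π 0 = π (2*t) →
    (∀ i < 2*t, ∀ k < 2*t, w i = w k →
      (min (π i) (π (i+1)), max (π i) (π (i+1)))
        = (min (π k) (π (k+1)), max (π k) (π (k+1)))) →
    t + 1 ≤ ((Finset.range (2*t+1)).image π).card →
    CatalanReducible ((List.range (2*t)).map w) := by
  induction t with
  | zero =>
    intro n w π _ _ _ _
    simpa using CatalanReducible.nil
  | succ t IH =>
    intro n w π hPM hclosed hcon hrange
    rw [show 2*(t+1) = 2*t+2 from by ring] at hPM hclosed hcon hrange ⊢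
    classical
    set S : Finset ℕ :=
      (Finset.range (2*t+2+1)).filter fun p => 0 < p ∧ ∀ m < p, π m ≠ π p with hSdef
    set F : Finset ℕ :=
      (Finset.range (2*t+2)).filter fun i => ∀ q < 2*t+2, w q = w i → i ≤ q with hFdef
    have hSmem : ∀ p ∈ S, 0 < p ∧ p < 2*t+2+1 ∧ ∀ m < p, π m ≠ π p := by
      intro p hp
      simp only [hSdef, Finset.mem_filter, Finset.mem_range] at hp
      tauto
    -- Step 1: every value is attained at 0 or at a new position
    have hRS : (Finset.range (2*t+2+1)).image π ⊆ (insert 0 S).image π := by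
      intro x hx
      simp only [Finset.mem_image, Finset.mem_range] at hx
      obtain ⟨k, hk, rfl⟩ := hx
      have hex : ∃ m, π m = π k := ⟨k, rfl⟩
      obtain ⟨k₀, hspec, hmin, hle⟩ :
          ∃ k₀, π k₀ = π k ∧ (∀ m < k₀, ¬ π m = π k) ∧ k₀ ≤ k :=
        ⟨Nat.find hex, Nat.find_spec hex, fun m hm => Nat.find_min hex hm,
          Nat.find_min' hex rfl⟩
      rcases Nat.eq_zero_or_pos k₀ with h0 | h0
      · exact Finset.mem_image.mpr ⟨0, Finset.mem_insert_self _ _, by rw [← h0, hspec]⟩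
      · refine Finset.mem_image.mpr ⟨k₀, Finset.mem_insert_of_mem ?_, hspec⟩
        simp only [hSdef, Finset.mem_filter, Finset.mem_range]
        exact ⟨by omega, h0, fun m hm => by rw [hspec]; exact hmin m hm⟩
    have hScard : t + 1 ≤ S.card := by
      have h1 := Finset.card_le_card hRS
      have h2 : ((insert 0 S).image π).card ≤ (insert 0 S).card := Finset.card_image_le
      have h3 : (insert 0 S).card ≤ S.card + 1 := Finset.card_insert_le _ _
      omega
    -- Step 2: F.card = t + 1
    have hFcard : F.card = t + 1 := by
      have h2t : (Finset.range (2*t+2)).card =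
          ∑ v ∈ (Finset.range (2*t+2)).image w,
            ((Finset.range (2*t+2)).filter fun k => w k = v).card :=
        Finset.card_eq_sum_card_image w (Finset.range (2*t+2))
      have hfib : ∀ v ∈ (Finset.range (2*t+2)).image w,
          ((Finset.range (2*t+2)).filter fun k => w k = v).card = 2 := by
        intro v hv
        obtain ⟨i, hi, rfl⟩ := Finset.mem_image.mp hv
        exact hPM i (Finset.mem_range.mp hi)
      rw [Finset.sum_congr rfl hfib, Finset.sum_const, Finset.card_range,
        smul_eq_mul] at h2t
      have hbij : F.card = ((Finset.range (2*t+2)).image w).card := by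
        apply Finset.card_bij (fun i _ => w i)
        · intro a ha
          exact Finset.mem_image_of_mem w (Finset.mem_filter.mp ha).1
        · intro a ha b hb hab
          have ha' := Finset.mem_filter.mp ha
          have hb' := Finset.mem_filter.mp hb
          have h1 := ha'.2 b (Finset.mem_range.mp hb'.1) hab.symm
          have h2 := hb'.2 a (Finset.mem_range.mp ha'.1) hab
          omega
        · intro v hv
          obtain ⟨i, hi, rfl⟩ := Finset.mem_image.mp hv
          have hex : ∃ q, q < 2*t+2 ∧ w q = w i := ⟨i, Finset.mem_range.mp hi, rfl⟩
          refine ⟨Nat.find hex, ?_, (Nat.find_spec hex).2⟩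
          simp only [hFdef, Finset.mem_filter, Finset.mem_range]
          refine ⟨(Nat.find_spec hex).1, fun q hq hwq => ?_⟩
          by_contra hlt
          exact Nat.find_min hex (by omega) ⟨hq, by rw [hwq, (Nat.find_spec hex).2]⟩
      omega
    -- Step 3: p ↦ p - 1 maps S into F
    have hd : ∀ p ∈ S, p - 1 ∈ F := by
      intro p hp
      obtain ⟨hp0, hpL, hnew⟩ := hSmem p hp
      simp only [hFdef, Finset.mem_filter, Finset.mem_range]
      refine ⟨by omega, fun q hq hwq => ?_⟩
      by_contra hlt
      push_neg at hlt
      have hcfull := hcon q hq (p-1) (by omega) hwq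
      rw [show p - 1 + 1 = p from by omega] at hcfull
      rcases minmax_pair hcfull with ⟨h1, h2⟩ | ⟨h1, h2⟩
      · exact hnew (q+1) (by omega) h2
      · exact hnew q (by omega) h1
    have hinj : Set.InjOn (· - 1) ↑S := by
      intro p hp q hq h
      have h1 := (hSmem p hp).1
      have h2 := (hSmem q hq).1
      have h' : p - 1 = q - 1 := h
      omega
    have himS : S.image (· - 1) = F := by
      apply Finset.eq_of_subset_of_card_le
      · intro x hx
        obtain ⟨p, hp, rfl⟩ := Finset.mem_image.mp hx
        exact hd p hp
      · rw [Finset.card_image_of_injOn hinj]; omega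
    have hFne : F.Nonempty := Finset.card_pos.mp (by omega)
    set j := F.max' hFne with hjdef
    have hjF : j ∈ F := F.max'_mem hFne
    have hjmax : ∀ i ∈ F, i ≤ j := fun i hi => F.le_max' i hi
    have hjL : j < 2*t+2 := Finset.mem_range.mp (Finset.mem_filter.mp hjF).1
    have hjS : j + 1 ∈ S := by
      have hj' : j ∈ S.image (· - 1) := himS ▸ hjF
      obtain ⟨p, hp, hpe⟩ := Finset.mem_image.mp hj'
      have hp0 := (hSmem p hp).1
      have hpe' : p - 1 = j := hpe
      have : p = j + 1 := by omega
      exact this ▸ hp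
    have hnewj : ∀ m < j+1, π m ≠ π (j+1) := (hSmem _ hjS).2.2
    have hj1L : j + 1 < 2*t+2 := by
      by_contra h
      have hje : j + 1 = 2*t+2 := by
        have := (hSmem _ hjS).2.1; omega
      exact hnewj 0 (by omega) (by rw [hje]; exact hclosed)
    -- Step 5: the partner of position j+1
    have hfilt := hPM (j+1) hj1L
    have hmemj1 : j+1 ∈ (Finset.range (2*t+2)).filter fun k => w k = w (j+1) :=
      Finset.mem_filter.mpr ⟨Finset.mem_range.mpr hj1L, rfl⟩
    obtain ⟨p, hpmem, hpne⟩ :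
        ∃ p ∈ (Finset.range (2*t+2)).filter fun k => w k = w (j+1), p ≠ j+1 := by
      by_contra h
      push_neg at h
      have hsub : ((Finset.range (2*t+2)).filter fun k => w k = w (j+1)) ⊆ {j+1} :=
        fun x hx => Finset.mem_singleton.mpr (h x hx)
      have := Finset.card_le_card hsub
      rw [hfilt, Finset.card_singleton] at this
      omega
    have hpL : p < 2*t+2 := Finset.mem_range.mp (Finset.mem_filter.mp hpmem).1
    have hpw : w p = w (j+1) := (Finset.mem_filter.mp hpmem).2
    have hocc : ((Finset.range (2*t+2)).filter fun k => w k = w (j+1)) = {p, j+1} := by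
      symm
      apply Finset.eq_of_subset_of_card_le
      · intro x hx
        rcases Finset.mem_insert.mp hx with rfl | hx'
        · exact hpmem
        · rw [Finset.mem_singleton.mp hx']; exact hmemj1
      · rw [hfilt, Finset.card_insert_of_notMem (by simp [hpne]), Finset.card_singleton]
    have hples : p ≤ j := by
      by_contra h
      push_neg at h
      have hj1F : j + 1 ∈ F := by
        simp only [hFdef, Finset.mem_filter, Finset.mem_range]
        refine ⟨hj1L, fun q hq hwq => ?_⟩
        have hqm : q ∈ (Finset.range (2*t+2)).filter fun k => w k = w (j+1) :=
          Finset.mem_filter.mpr ⟨Finset.mem_range.mpr hq, hwq⟩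
        rw [hocc] at hqm
        rcases Finset.mem_insert.mp hqm with rfl | h'
        · omega
        · rw [Finset.mem_singleton.mp h']
      have := hjmax _ hj1F; omega
    have hconp := hcon p hpL (j+1) hj1L hpw
    have hpj : p = j := by
      by_contra h
      rcases minmax_pair hconp with ⟨h1, h2⟩ | ⟨h1, h2⟩
      · exact hnewj p (by omega) h1
      · exact hnewj (p+1) (by omega) h2
    subst hpj
    have hπjv : π j ≠ π (j+1) := fun h => hnewj j (by omega) h
    have hjj2 : π (j+2) = π j := by
      rw [show j + 1 + 1 = j + 2 from rfl] at hconp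
      rcases minmax_pair hconp with ⟨h1, h2⟩ | ⟨h1, h2⟩
      · exact absurd h1 hπjv
      · exact h1.symm
    -- rename j := j for clarity of what follows
    -- new word and walk
    set w' : ℕ → ℕ := fun k => if k < j then w k else w (k+2) with hw'def
    set π' : ℕ → Fin n := fun k => if k < j then π k else π (k+2) with hπ'def
    have hπ'le : ∀ k ≤ j, π' k = π k := by
      intro k hk
      simp only [hπ'def]
      rcases lt_or_eq_of_le hk with h | h
      · rw [if_pos h]
      · rw [if_neg (by omega), show k + 2 = j + 2 from by omega, hjj2, h]
    have hπ'ge : ∀ k, j ≤ k → π' k = π (k+2) := by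
      intro k hk
      simp only [hπ'def]; rw [if_neg (by omega)]
    have hw'eq : ∀ i, w' i = w (if i < j then i else i + 2) := by
      intro i
      simp only [hw'def]
      by_cases h : i < j
      · rw [if_pos h, if_pos h]
      · rw [if_neg h, if_neg h]

    have hedge : ∀ i, i ≥ j ∨ i + 1 ≤ j →
        (min (π' i) (π' (i+1)), max (π' i) (π' (i+1)))
          = (min (π (if i < j then i else i+2)) (π ((if i < j then i else i+2)+1)),
             max (π (if i < j then i else i+2)) (π ((if i < j then i else i+2)+1))) := by
      intro i _
      by_cases h : i < j
      · rw [if_pos h, hπ'le i (le_of_lt h), hπ'le (i+1) (by omega)]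
      · rw [if_neg h, hπ'ge i (by omega), hπ'ge (i+1) (by omega)]
    have hPM' : ∀ i < 2*t, ((Finset.range (2*t)).filter fun k => w' k = w' i).card = 2 := by
      intro i hi
      have heiL : (if i < j then i else i + 2) < 2*t+2 := by split <;> omega
      have hwne : w (if i < j then i else i + 2) ≠ w (j+1) := by
        intro h
        have hm : (if i < j then i else i + 2) ∈
            (Finset.range (2*t+2)).filter fun k => w k = w (j+1) :=
          Finset.mem_filter.mpr ⟨Finset.mem_range.mpr heiL, h⟩
        rw [hocc] at hm
        rcases Finset.mem_insert.mp hm with h' | h'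
        · split at h' <;> omega
        · rw [Finset.mem_singleton] at h'; split at h' <;> omega
      have hcards : ((Finset.range (2*t)).filter fun k => w' k = w' i).card
          = ((Finset.range (2*t+2)).filter fun k =>
              w k = w (if i < j then i else i + 2)).card := by
        apply Finset.card_bij' (fun k _ => if k < j then k else k + 2)
          (fun k _ => if k < j then k else k - 2)
        · intro a ha
          have ha' := Finset.mem_filter.mp ha
          have haL := Finset.mem_range.mp ha'.1
          refine Finset.mem_filter.mpr ⟨Finset.mem_range.mpr (by split <;> omega), ?_⟩
          rw [← hw'eq a, ha'.2, hw'eq i]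
        · intro b hb
          have hb' := Finset.mem_filter.mp hb
          have hbL := Finset.mem_range.mp hb'.1
          have hbp : b ≠ j ∧ b ≠ j + 1 := by
            constructor <;> intro h <;> subst h
            · exact hwne (hb'.2.symm.trans hpw)
            · exact hwne hb'.2.symm
          refine Finset.mem_filter.mpr ⟨Finset.mem_range.mpr (by split <;> omega), ?_⟩
          by_cases h : b < j
          · rw [if_pos h, hw'eq b, if_pos h, hw'eq i]
            exact hb'.2
          · rw [if_neg h, hw'eq (b-2), if_neg (by omega),
              show b - 2 + 2 = b from by omega, hw'eq i]
            exact hb'.2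
        · intro a ha
          have haL := Finset.mem_range.mp (Finset.mem_filter.mp ha).1
          by_cases h : a < j
          · rw [if_pos h, if_pos h]
          · rw [if_neg h, if_neg (show ¬ a + 2 < j by omega)]
            omega
        · intro b hb
          have hb' := Finset.mem_filter.mp hb
          have hbL := Finset.mem_range.mp hb'.1
          have hbp : b ≠ j ∧ b ≠ j + 1 := by
            constructor <;> intro h <;> subst h
            · exact hwne (hb'.2.symm.trans hpw)
            · exact hwne hb'.2.symm
          by_cases h : b < j
          · rw [if_pos h, if_pos h]
          · rw [if_neg h, if_neg (show ¬ b - 2 < j by omega)]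
            omega
      rw [hcards]
      exact hPM _ heiL
    have hclosed' : π' 0 = π' (2*t) := by
      rw [hπ'le 0 (Nat.zero_le _), hπ'ge (2*t) (by omega)]
      exact hclosed
    have hcon' : ∀ i < 2*t, ∀ k < 2*t, w' i = w' k →
        (min (π' i) (π' (i+1)), max (π' i) (π' (i+1)))
          = (min (π' k) (π' (k+1)), max (π' k) (π' (k+1))) := by
      intro i hi k hk hik
      rw [hedge i (by omega), hedge k (by omega)]
      apply hcon
      · split <;> omega
      · split <;> omega
      · rw [← hw'eq i, ← hw'eq k]; exact hik
    have hrange' : t + 1 ≤ ((Finset.range (2*t+1)).image π').card := by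
      have hsub : (Finset.range (2*t+2+1)).image π ⊆
          insert (π (j+1)) ((Finset.range (2*t+1)).image π') := by
        intro x hx
        obtain ⟨k, hk, rfl⟩ := Finset.mem_image.mp hx
        have hkL := Finset.mem_range.mp hk
        by_cases hv : π k = π (j+1)
        · rw [hv]; exact Finset.mem_insert_self _ _
        · apply Finset.mem_insert_of_mem
          apply Finset.mem_image.mpr
          by_cases hkj : k ≤ j
          · exact ⟨k, Finset.mem_range.mpr (by omega), hπ'le k hkj⟩
          · have hne : k ≠ j + 1 := fun h => hv (by rw [h])
            refine ⟨k - 2, Finset.mem_range.mpr (by omega), ?_⟩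
            rw [hπ'ge (k-2) (by omega), show k - 2 + 2 = k from by omega]
      have h1 := Finset.card_le_card hsub
      have h2 : (insert (π (j+1)) ((Finset.range (2*t+1)).image π')).card
          ≤ ((Finset.range (2*t+1)).image π').card + 1 := Finset.card_insert_le _ _
      omega
    have hred := IH n w' π' hPM' hclosed' hcon' hrange'
    -- list manipulations
    have hplt : j ≤ 2*t := by omega
    have hlist1 : (List.range (2*t)).map w'
        = ((List.range j).map w) ++ ((List.range (2*t - j)).map fun k => w (k+j+2)) := by
      have e1 : 2*t = j + (2*t - j) := by omega
      conv_lhs => rw [e1, List.range_add]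
      rw [List.map_append, List.map_map]
      congr 1
      · apply List.map_congr_left
        intro a ha
        have := List.mem_range.mp ha
        rw [hw'eq, if_pos this]
      · apply List.map_congr_left
        intro a _
        simp only [Function.comp_apply]
        rw [hw'eq, if_neg (by omega)]
        congr 1
        omega
    have hlist2 : (List.range (2*t+2)).map w
        = ((List.range j).map w) ++ w j :: w j ::
            ((List.range (2*t - j)).map fun k => w (k+j+2)) := by
      have e2 : 2*t+2 = j + (2 + (2*t - j)) := by omega
      conv_lhs => rw [e2, List.range_add, List.range_add]
      rw [show List.range 2 = [0, 1] from rfl]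
      simp only [List.map_append, List.map_map, List.map_cons, List.map_nil,
        List.cons_append, List.nil_append, Function.comp_apply]
      congr 1
      rw [show j + 0 = j from rfl, show w (j + 1) = w j from hpw.symm]
      congr 2
      apply List.map_congr_left
      intro a _
      simp only [Function.comp_apply]
      congr 1
      omega
    rw [hlist2]
    rw [hlist1] at hred
    exact CatalanReducible.step _ _ _ hred

/-- For any pair-matched non-Catalan word `w` of length `2t`,
`#Π*_{L_W,n}(w)/n^{t+1} → 0` as `n → ∞`. -/
theorem wignerStar_nonCatalan_limit (t : ℕ) (w : Fin (2 * t) → ℕ)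
    (hw : PairMatched w) (hc : ¬ CatalanWord w) :
    Tendsto (fun n : ℕ => ((wignerStar t n w).ncard : ℝ) / (n : ℝ) ^ (t + 1))
      atTop (nhds 0) := by
  classical
  have hbound : ∀ n : ℕ, (wignerStar t n w).ncard ≤ t ^ (2*t+1) * n ^ t := by
    intro n
    have hsmall : ∀ π ∈ wignerStar t n w, (Finset.image π Finset.univ).card ≤ t := by
      intro π hπ
      by_contra hbig
      push_neg at hbig
      apply hc
      obtain ⟨h1, h2⟩ := hπ
      set wn : ℕ → ℕ := fun k => if h : k < 2*t then w ⟨k, h⟩ else 0 with hwn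
      set pn : ℕ → Fin n := fun k => if h : k < 2*t+1 then π ⟨k, h⟩ else π 0 with hpn
      have hPMn : ∀ i < 2*t, ((Finset.range (2*t)).filter fun k => wn k = wn i).card = 2 := by
        intro i hi
        have himg : ((Finset.range (2*t)).filter fun k => wn k = wn i)
            = Finset.image Fin.val
                (Finset.univ.filter fun k : Fin (2*t) => w k = w ⟨i, hi⟩) := by
          ext x
          simp only [Finset.mem_filter, Finset.mem_range, Finset.mem_image,
            Finset.mem_univ, true_and]
          constructor
          · rintro ⟨hx, he⟩
            refine ⟨⟨x, hx⟩, ?_, rfl⟩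
            simp only [hwn] at he
            rwa [dif_pos hx, dif_pos hi] at he
          · rintro ⟨k, hk, rfl⟩
            refine ⟨k.isLt, ?_⟩
            simp only [hwn]
            rw [dif_pos k.isLt, dif_pos hi]
            simpa using hk
        rw [himg, Finset.card_image_of_injective _ Fin.val_injective]
        exact hw ⟨i, hi⟩
      have e0 : (0 : Fin (2*t+1)) = ⟨0, by omega⟩ := by
        apply Fin.ext; simp
      have el : Fin.last (2*t) = ⟨2*t, by omega⟩ := rfl
      have hcl : pn 0 = pn (2*t) := by
        simp only [hpn]
        rw [dif_pos (show (0:ℕ) < 2*t+1 by omega), dif_pos (show 2*t < 2*t+1 by omega)]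
        have h1' := h1
        rw [e0, el] at h1'
        exact h1'
      have hconn : ∀ i < 2*t, ∀ k < 2*t, wn i = wn k →
          (min (pn i) (pn (i+1)), max (pn i) (pn (i+1)))
            = (min (pn k) (pn (k+1)), max (pn k) (pn (k+1))) := by
        intro i hi k hk hik
        have hik' : w ⟨i, hi⟩ = w ⟨k, hk⟩ := by
          simp only [hwn] at hik
          rwa [dif_pos hi, dif_pos hk] at hik
        have h2' := h2 ⟨i, hi⟩ ⟨k, hk⟩ hik'
        have ec : ∀ (m : ℕ) (hm : m < 2*t), pn m = π ((⟨m, hm⟩ : Fin (2*t)).castSucc) := by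
          intro m hm
          simp only [hpn]
          rw [dif_pos (show m < 2*t+1 by omega)]
          rfl
        have es : ∀ (m : ℕ) (hm : m < 2*t), pn (m+1) = π ((⟨m, hm⟩ : Fin (2*t)).succ) := by
          intro m hm
          simp only [hpn]
          rw [dif_pos (show m+1 < 2*t+1 by omega)]
          rfl
        rw [ec i hi, es i hi, ec k hk, es k hk]
        exact h2'
      have himg2 : (Finset.range (2*t+1)).image pn = Finset.image π Finset.univ := by
        ext x
        simp only [Finset.mem_image, Finset.mem_range, Finset.mem_univ, true_and]
        constructor
        · rintro ⟨k, hk, rfl⟩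
          exact ⟨⟨k, hk⟩, by simp only [hpn]; rw [dif_pos hk]⟩
        · rintro ⟨k, rfl⟩
          refine ⟨k.val, k.isLt, ?_⟩
          simp only [hpn]
          rw [dif_pos k.isLt]
      have hrange : t + 1 ≤ ((Finset.range (2*t+1)).image pn).card := by
        rw [himg2]; exact hbig
      have hred := key' t n wn pn hPMn hcl hconn hrange
      show CatalanReducible (List.ofFn w)
      have hofn : List.ofFn w = (List.range (2*t)).map wn := by
        apply List.ext_getElem
        · simp
        · intro i hi1 hi2
          simp only [List.getElem_ofFn, List.getElem_map, List.getElem_range]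
          simp only [hwn]
          rw [dif_pos (by simpa using hi1)]
      rw [hofn]
      exact hred
    have hsub : wignerStar t n w ⊆ Set.range
        (fun p : (Fin t → Fin n) × (Fin (2*t+1) → Fin t) => p.1 ∘ p.2) := by
      intro π hπ
      have hcard := hsmall π hπ
      have hmem : ∀ k, π k ∈ (Finset.image π Finset.univ).toList := fun k =>
        Finset.mem_toList.mpr (Finset.mem_image_of_mem π (Finset.mem_univ k))
      have hlen : (Finset.image π Finset.univ).toList.length ≤ t := by
        rw [Finset.length_toList]; exact hcard
      refine ⟨(fun i => (Finset.image π Finset.univ).toList.getD i (π 0),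
        fun k => ⟨List.idxOf (π k) (Finset.image π Finset.univ).toList, by
          have := List.idxOf_lt_length_iff.mpr (hmem k); omega⟩), ?_⟩
      funext k
      simp only [Function.comp_apply]
      rw [List.getD_eq_getElem _ _ (List.idxOf_lt_length_iff.mpr (hmem k))]
      exact List.getElem_idxOf _
    have hle := Set.ncard_le_ncard hsub (Set.toFinite _)
    have hr : (Set.range
        (fun p : (Fin t → Fin n) × (Fin (2*t+1) → Fin t) => p.1 ∘ p.2)).ncard
          ≤ t ^ (2*t+1) * n ^ t := by
      have h1 : (Set.range
          (fun p : (Fin t → Fin n) × (Fin (2*t+1) → Fin t) => p.1 ∘ p.2)).ncard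
            ≤ (Set.univ : Set ((Fin t → Fin n) × (Fin (2*t+1) → Fin t))).ncard := by
        rw [← Set.image_univ]
        exact Set.ncard_image_le (Set.toFinite _)
      rw [Set.ncard_univ, Nat.card_eq_fintype_card, Fintype.card_prod,
        Fintype.card_fun, Fintype.card_fun, Fintype.card_fin, Fintype.card_fin,
        Fintype.card_fin] at h1
      calc _ ≤ n ^ t * t ^ (2*t+1) := h1
      _ = t ^ (2*t+1) * n ^ t := Nat.mul_comm _ _
    exact le_trans hle hr
  have hfinal : ∀ n : ℕ, 1 ≤ n →
      ((wignerStar t n w).ncard : ℝ) / (n:ℝ)^(t+1) ≤ ((t:ℝ) ^ (2*t+1)) / n := by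
    intro n hn
    have hnpos : (0:ℝ) < n := by exact_mod_cast hn
    have hb' : ((wignerStar t n w).ncard : ℝ) ≤ ((t:ℝ) ^ (2*t+1)) * (n:ℝ)^t := by
      have := hbound n
      push_cast
      exact_mod_cast this
    have h1 : ((wignerStar t n w).ncard : ℝ) / (n:ℝ)^(t+1)
        ≤ (((t:ℝ) ^ (2*t+1)) * (n:ℝ)^t) / (n:ℝ)^(t+1) :=
      (div_le_div_iff_of_pos_right (by positivity)).mpr hb'
    have h2 : (((t:ℝ) ^ (2*t+1)) * (n:ℝ)^t) / (n:ℝ)^(t+1) = ((t:ℝ) ^ (2*t+1)) / n := by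
      rw [pow_succ (n:ℝ) t]
      rw [mul_comm ((n:ℝ)^t) (n:ℝ), mul_div_mul_right _ _ (by positivity : ((n:ℝ)^t) ≠ 0)]
    rw [h2] at h1
    exact h1
  apply squeeze_zero' (Filter.Eventually.of_forall fun n => by positivity)
    (Filter.eventually_atTop.mpr ⟨1, hfinal⟩)
    (tendsto_const_div_atTop_nhds_zero_nat _)
end

section
/- For the Toeplitz link function L_T and any Catalan word w of length 2t, lim_{n→∞} #Π*_{L_T,n}(w)/n^{t+1} = 1. -/
open Filter Topology
open scoped Classical

lemma ext_lemma {n : ℕ} (w : List ℕ) (hw : CatalanReducible w) :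
    (∀ b ∈ w, w.count b = 2) → ∀ f : ℕ → Fin n,
    ∃ p : ℕ → Fin n, p 0 = f 0 ∧
      (∀ k, k < w.length → (∀ m, m < k → w[m]? ≠ w[k]?) → p (k+1) = f (k+1)) ∧
      p w.length = p 0 ∧
      (∀ i j, i ≠ j → i < w.length → j < w.length → w[i]? = w[j]? →
        (p i : ℤ) - p (i+1) + ((p j : ℤ) - p (j+1)) = 0) := by
  induction hw with
  | nil =>
    intro _ f
    exact ⟨fun _ => f 0, rfl, by simp, rfl, by simp⟩
  | step l₁ l₂ a h ih =>
    intro hpm f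
    set k := l₁.length with hk
    have hLlen : (l₁ ++ a :: a :: l₂).length = k + 2 + l₂.length := by
      simp [hk]; omega
    have hL'len : (l₁ ++ l₂).length = k + l₂.length := by simp [hk]
    have haa : a ∈ l₁ ++ a :: a :: l₂ := by simp
    have hca := hpm a haa
    rw [List.count_append, List.count_cons, List.count_cons] at hca
    simp at hca
    have ha1 : a ∉ l₁ := by
      intro hmem
      have := List.count_pos_iff.2 hmem
      omega
    have ha2 : a ∉ l₂ := by
      intro hmem
      have := List.count_pos_iff.2 hmem
      omega
    have hpm' : ∀ b ∈ l₁ ++ l₂, (l₁ ++ l₂).count b = 2 := by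
      intro b hb
      have hba : b ≠ a := by
        rintro rfl
        rcases List.mem_append.1 hb with h' | h' <;> [exact ha1 h'; exact ha2 h']
      have hbw : b ∈ l₁ ++ a :: a :: l₂ := by
        rcases List.mem_append.1 hb with h' | h' <;> simp [h']
      have := hpm b hbw
      rw [List.count_append, List.count_cons, List.count_cons] at this
      rw [List.count_append]
      simp [hba, Ne.symm hba] at this
      omega
    obtain ⟨p', hp0, hgen, hcirc, hpair⟩ :=
      ih hpm' (fun m => if m ≤ k then f m else f (m+2))
    set p : ℕ → Fin n := fun m => if m ≤ k then p' m else if m = k+1 then f (k+1)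
      else p' (m-2) with hp
    have hple : ∀ m, m ≤ k → p m = p' m := fun m hm => by simp [hp, hm]
    have hpk1 : p (k+1) = f (k+1) := by simp [hp]
    have hpge : ∀ r, p (k+2+r) = p' (k+r) := by
      intro r
      simp only [hp]
      rw [if_neg (by omega), if_neg (by omega)]
      congr 1
      omega
    have hget_lt : ∀ m, m < k → (l₁ ++ a :: a :: l₂)[m]? = (l₁ ++ l₂)[m]? := by
      intro m hm
      rw [List.getElem?_append_left hm, List.getElem?_append_left hm]
    have hget_k : (l₁ ++ a :: a :: l₂)[k]? = some a := by
      rw [List.getElem?_append_right (le_refl k)]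
      simp [hk]
    have hget_k1 : (l₁ ++ a :: a :: l₂)[k+1]? = some a := by
      rw [List.getElem?_append_right (by omega)]
      simp [hk]
    have hget_ge : ∀ r, (l₁ ++ a :: a :: l₂)[k+2+r]? = (l₁ ++ l₂)[k+r]? := by
      intro r
      rw [List.getElem?_append_right (by omega : k ≤ k+2+r),
        List.getElem?_append_right (by omega : k ≤ k+r)]
      rw [show k+2+r-k = r+1+1 by omega, show k+r-k = r by omega]
      simp
    refine ⟨p, ?_, ?_, ?_, ?_⟩
    · rw [hple 0 (by omega), hp0]; simp
    · -- generating values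
      intro k' hk' hfirst
      rw [hLlen] at hk'
      by_cases h1 : k' < k
      · rw [hple (k'+1) (by omega)]
        have hfo : ∀ m, m < k' → (l₁ ++ l₂)[m]? ≠ (l₁ ++ l₂)[k']? := by
          intro m hm
          rw [← hget_lt m (by omega), ← hget_lt k' h1]
          exact hfirst m hm
        have := hgen k' (by rw [hL'len]; omega) hfo
        rw [this]
        simp [Nat.succ_le_of_lt h1]
      by_cases h2 : k' = k
      · subst h2; exact hpk1
      by_cases h3 : k' = k+1
      · exfalso
        have := hfirst k (by omega)
        rw [hget_k, h3, hget_k1] at this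
        exact this rfl
      · -- k' ≥ k+2
        have hr : k' = k+2+(k'-k-2) := by omega
        set r := k'-k-2 with hrr
        have hfo : ∀ m, m < k+r → (l₁ ++ l₂)[m]? ≠ (l₁ ++ l₂)[k+r]? := by
          intro m hm
          rw [← hget_ge r, ← hr]
          by_cases hmk : m < k
          · rw [← hget_lt m hmk]
            exact hfirst m (by omega)
          · have hms : m = k + (m-k) := by omega
            rw [hms, ← hget_ge (m-k)]
            exact hfirst (k+2+(m-k)) (by omega)
        have hg := hgen (k+r) (by rw [hL'len]; omega) hfo
        have : p (k'+1) = p' (k+r+1) := by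
          rw [show k'+1 = k+2+(r+1) by omega, hpge (r+1)]
          congr 1
        rw [this, hg, if_neg (by omega : ¬ (k+r+1 ≤ k)), show k+r+1+2 = k'+1 by omega]
    · -- circuit
      rw [hLlen, hpge l₂.length, ← hL'len, hcirc, hple 0 (by omega)]
    · -- pairs
      intro i j hij hi hj heq
      rw [hLlen] at hi hj
      have hD_lt : ∀ m, m < k → ((p m : ℤ) - p (m+1)) = ((p' m : ℤ) - p' (m+1)) := by
        intro m hm
        rw [hple m (by omega), hple (m+1) (by omega)]
      have hD_ge : ∀ r, ((p (k+2+r) : ℤ) - p (k+2+r+1)) =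
          ((p' (k+r) : ℤ) - p' (k+r+1)) := by
        intro r
        rw [hpge r, show k+2+r+1 = k+2+(r+1) by omega, hpge (r+1)]
        rfl
      have hpk2 : p (k+2) = p' k := by
        have := hpge 0
        simpa using this
      have hget_mem : ∀ m, m ≠ k → m ≠ k+1 → (l₁ ++ a :: a :: l₂)[m]? ≠ some a := by
        intro m h1 h2 hsome
        by_cases hmk : m < k
        · rw [hget_lt m hmk, List.getElem?_append_left hmk] at hsome
          exact ha1 (List.mem_of_getElem? hsome)
        · by_cases hm2 : m < k + 2 + l₂.length
          · rw [show m = k+2+(m-k-2) by omega, hget_ge,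
              List.getElem?_append_right (by omega : k ≤ k + (m-k-2))] at hsome
            exact ha2 (List.mem_of_getElem? hsome)
          · rw [List.getElem?_eq_none (by rw [hLlen]; omega)] at hsome
            cases hsome
      by_cases hik : i = k ∨ i = k + 1
      · have hia : (l₁ ++ a :: a :: l₂)[i]? = some a := by
          rcases hik with rfl | rfl
          exacts [hget_k, hget_k1]
        have hjk : j = k ∨ j = k+1 := by
          by_contra hcon
          push_neg at hcon
          exact hget_mem j hcon.1 hcon.2 (heq ▸ hia)
        rcases hik with rfl | rfl <;> rcases hjk with rfl | rfl
        · exact absurd rfl hij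
        · rw [hple k le_rfl, hpk1, hpk2]; ring
        · rw [hple k le_rfl, hpk1, hpk2]; ring
        · exact absurd rfl hij
      · push_neg at hik
        have hjk : ¬ (j = k ∨ j = k+1) := by
          rintro (rfl | rfl)
          · exact hget_mem i hik.1 hik.2 (heq.trans hget_k)
          · exact hget_mem i hik.1 hik.2 (heq.trans hget_k1)
        push_neg at hjk
        set sh : ℕ → ℕ := fun m => if m < k then m else m - 2 with hsh
        have key : ∀ m, m ≠ k → m ≠ k+1 →
            (l₁ ++ a :: a :: l₂)[m]? = (l₁ ++ l₂)[sh m]? ∧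
            ((p m : ℤ) - p (m+1)) = ((p' (sh m) : ℤ) - p' (sh m + 1)) := by
          intro m h1 h2
          by_cases hmk : m < k
          · rw [show sh m = m by simp [hsh, hmk]]
            exact ⟨hget_lt m hmk, hD_lt m hmk⟩
          · rw [show sh m = m - 2 by simp [hsh, hmk]]
            constructor
            · rw [show m = k+2+(m-k-2) by omega, hget_ge]
              congr 1
              omega
            · have h3 := hD_ge (m-k-2)
              rw [show k+2+(m-k-2) = m by omega, show k+(m-k-2) = m-2 by omega] at h3
              exact h3
        obtain ⟨hgi, hDi⟩ := key i hik.1 hik.2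
        obtain ⟨hgj, hDj⟩ := key j hjk.1 hjk.2
        rw [hDi, hDj]
        refine hpair (sh i) (sh j) ?_ ?_ ?_ ?_
        · simp only [hsh]
          split_ifs <;> omega
        · rw [hL'len]; simp only [hsh]; split_ifs <;> omega
        · rw [hL'len]; simp only [hsh]; split_ifs <;> omega
        · rw [← hgi, ← hgj]; exact heq

noncomputable def partner {h : ℕ} (w : Fin h → ℕ) (j : Fin h) : Fin h :=
  if hx : ∃ i, i ≠ j ∧ w i = w j then hx.choose else j

section Partner

variable {h : ℕ} {w : Fin h → ℕ}

lemma partner_exists (hw : PairMatched w) (j : Fin h) : ∃ i, i ≠ j ∧ w i = w j := by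
  have hc := hw j
  rw [Finset.card_eq_two] at hc
  obtain ⟨a, b, hab, hs⟩ := hc
  have hj : j ∈ ({a, b} : Finset (Fin h)) := by
    rw [← hs]; simp
  have ha : w a = w j := by
    have : a ∈ Finset.univ.filter (fun i => w i = w j) := by rw [hs]; simp
    simpa using this
  have hb : w b = w j := by
    have : b ∈ Finset.univ.filter (fun i => w i = w j) := by rw [hs]; simp
    simpa using this
  simp only [Finset.mem_insert, Finset.mem_singleton] at hj
  rcases hj with rfl | rfl
  · exact ⟨b, Ne.symm hab, hb⟩
  · exact ⟨a, hab, ha⟩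

lemma partner_spec (hw : PairMatched w) (j : Fin h) :
    partner w j ≠ j ∧ w (partner w j) = w j := by
  rw [partner, dif_pos (partner_exists hw j)]
  exact (partner_exists hw j).choose_spec

lemma partner_ne (hw : PairMatched w) (j : Fin h) : partner w j ≠ j :=
  (partner_spec hw j).1

lemma partner_eq (hw : PairMatched w) (j : Fin h) : w (partner w j) = w j :=
  (partner_spec hw j).2

lemma partner_uniq (hw : PairMatched w) {j i : Fin h} (hne : i ≠ j)
    (heq : w i = w j) : i = partner w j := by
  have hc := hw j
  rw [Finset.card_eq_two] at hc
  obtain ⟨a, b, hab, hs⟩ := hc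
  have mem : ∀ x, w x = w j → x = a ∨ x = b := by
    intro x hx
    have : x ∈ Finset.univ.filter (fun i => w i = w j) := by simp [hx]
    rw [hs] at this
    simpa using this
  rcases mem j rfl with h1 | h1 <;>
    rcases mem i heq with h2 | h2 <;>
      rcases mem _ (partner_eq hw j) with h3 | h3 <;>
        first
          | (exact h2.trans h3.symm)
          | (exfalso; exact hne (h2.trans h1.symm))
          | (exfalso; exact partner_ne hw j (h3.trans h1.symm))

lemma partner_partner (hw : PairMatched w) (j : Fin h) :
    partner w (partner w j) = j :=
  (partner_uniq hw (Ne.symm (partner_ne hw j)) (partner_eq hw j).symm).symm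

lemma isGen_iff (hw : PairMatched w) (j : Fin h) : IsGen w j ↔ j < partner w j := by
  constructor
  · intro hg
    exact lt_of_le_of_ne (hg _ (partner_eq hw j)) (Ne.symm (partner_ne hw j))
  · intro hlt i hi
    by_cases hij : i = j
    · exact le_of_eq hij.symm
    · rw [partner_uniq hw hij hi]
      exact le_of_lt hlt

lemma not_isGen_iff (hw : PairMatched w) (j : Fin h) :
    ¬ IsGen w j ↔ partner w j < j := by
  rw [isGen_iff hw]
  rcases lt_trichotomy j (partner w j) with h1 | h1 | h1
  · simp [h1, not_lt_of_gt h1]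
  · exact absurd h1.symm (partner_ne hw j)
  · simp [h1, not_lt_of_gt h1]

lemma isGen_partner (hw : PairMatched w) {j : Fin h} (hj : ¬ IsGen w j) :
    IsGen w (partner w j) := by
  rw [isGen_iff hw, partner_partner hw]
  exact (not_isGen_iff hw j).1 hj

lemma not_isGen_partner (hw : PairMatched w) {j : Fin h} (hj : IsGen w j) :
    ¬ IsGen w (partner w j) := by
  rw [not_isGen_iff hw, partner_partner hw]
  exact (isGen_iff hw j).1 hj

end Partner

lemma card_gen {t : ℕ} {w : Fin (2*t) → ℕ} (hw : PairMatched w) :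
    (Finset.univ.filter fun i => IsGen w i).card = t := by
  have hbij : (Finset.univ.filter fun i => IsGen w i).card
      = (Finset.univ.filter fun i => ¬ IsGen w i).card := by
    apply Finset.card_bij' (fun i _ => partner w i) (fun i _ => partner w i)
    · intro a ha
      simp only [Finset.mem_filter, Finset.mem_univ, true_and] at ha ⊢
      exact not_isGen_partner hw ha
    · intro a ha
      simp only [Finset.mem_filter, Finset.mem_univ, true_and] at ha ⊢
      exact isGen_partner hw ha
    · intro a _; exact partner_partner hw a
    · intro a _; exact partner_partner hw a
  have hsum := Finset.card_filter_add_card_filter_not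
    (s := (Finset.univ : Finset (Fin (2*t)))) (p := fun i => IsGen w i)
  simp only [Finset.card_univ, Fintype.card_fin] at hsum
  omega

lemma count_ofFn {m : ℕ} (w : Fin m → ℕ) (b : ℕ) :
    (List.ofFn w).count b = (Finset.univ.filter fun i => w i = b).card := by
  rw [List.ofFn_eq_map, List.count_eq_countP, List.countP_map,
    Fin.univ_def, List.countP_eq_length_filter]
  simp [Finset.filter, Finset.card, Multiset.filter_coe]
  congr 1

lemma ncard_biUnion_le {ι α : Type*} (s : Finset ι) (f : ι → Set α)
    (hf : ∀ i, (f i).Finite) :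
    (⋃ i ∈ s, f i).ncard ≤ ∑ i ∈ s, (f i).ncard := by
  classical
  induction s using Finset.induction with
  | empty => simp
  | insert a s hx ih =>
    rw [Finset.set_biUnion_insert, Finset.sum_insert hx]
    exact le_trans (Set.ncard_union_le _ _) (by omega)
lemma lower_bound (t n : ℕ) (w : Fin (2*t) → ℕ) (hw : PairMatched w)
    (hc : CatalanWord w) : n ^ (t+1) ≤ (toepStar t n w).ncard := by
  classical
  have hlen : (List.ofFn w).length = 2*t := List.length_ofFn
  have hget : ∀ i : Fin (2*t), (List.ofFn w)[(i : ℕ)]? = some (w i) := by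
    intro i
    rw [List.getElem?_eq_some_iff]
    exact ⟨by simp [i.isLt], by simp⟩
  have hpm_list : ∀ b ∈ List.ofFn w, (List.ofFn w).count b = 2 := by
    intro b hb
    rw [count_ofFn]
    rw [List.mem_ofFn] at hb
    obtain ⟨i, rfl⟩ := hb
    exact hw i
  have hcard : Fintype.card {i : Fin (2*t) // IsGen w i} = t := by
    rw [Fintype.card_subtype]
    exact card_gen hw
  have key : ∀ v : Fin n × ({i : Fin (2*t) // IsGen w i} → Fin n),
      ∃ π, π ∈ toepStar t n w ∧ π 0 = v.1 ∧
        ∀ i : {i : Fin (2*t) // IsGen w i}, π (i.1.succ) = v.2 i := by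
    intro v
    set f : ℕ → Fin n := fun m =>
      if hm : 0 < m ∧ m - 1 < 2*t then
        (if hg : IsGen w ⟨m-1, hm.2⟩ then v.2 ⟨⟨m-1, hm.2⟩, hg⟩ else v.1)
      else v.1 with hf
    obtain ⟨p, hp0, hgen, hcirc, hpair⟩ := ext_lemma _ hc hpm_list f
    rw [hlen] at hgen hcirc hpair
    have hf0 : f 0 = v.1 := by simp [hf]
    have hgenval : ∀ (i : Fin (2*t)) (hg : IsGen w i), p ((i : ℕ) + 1) = v.2 ⟨i, hg⟩ := by
      intro i hg
      have hfo : ∀ m, m < (i : ℕ) → (List.ofFn w)[m]? ≠ (List.ofFn w)[(i : ℕ)]? := by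
        intro m hm
        have hm2t : m < 2*t := lt_trans hm i.isLt
        have h1 := hget ⟨m, hm2t⟩
        simp only [Fin.val_mk] at h1  -- maybe not needed
        rw [h1, hget i]
        intro hcon
        have : w ⟨m, hm2t⟩ = w i := Option.some.inj hcon
        have := hg _ this
        rw [Fin.le_def] at this
        simp at this
        omega
      have := hgen (i : ℕ) i.isLt hfo
      rw [this]
      simp only [hf]
      rw [dif_pos (⟨Nat.succ_pos _, by simpa using i.isLt⟩ : 0 < (i:ℕ)+1 ∧ (i:ℕ)+1-1 < 2*t)]
      have he : (⟨(i:ℕ)+1-1, by simpa using i.isLt⟩ : Fin (2*t)) = i := by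
        ext; simp
      rw [dif_pos (he ▸ hg)]
      congr 1
    refine ⟨fun m => p (m : ℕ), ⟨?_, ?_⟩, ?_, ?_⟩
    · show p ((0 : Fin (2*t+1)) : ℕ) = p ((Fin.last (2*t) : Fin (2*t+1)) : ℕ)
      simp only [Fin.val_zero, Fin.val_last]
      exact hcirc.symm
    · intro i j hij
      by_cases hijeq : i = j
      · rw [hijeq]
      · have hne : (i : ℕ) ≠ (j : ℕ) := fun hcon => hijeq (Fin.ext hcon)
        have := hpair (i : ℕ) (j : ℕ) hne i.isLt j.isLt
          (by rw [hget i, hget j, hij])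
        simp only [Fin.coe_castSucc, Fin.val_succ]
        omega
    · show p ((0 : Fin (2*t+1)) : ℕ) = v.1
      simp only [Fin.val_zero]
      rw [hp0, hf0]
    · intro i
      show p ((i.1.succ : Fin (2*t+1)) : ℕ) = v.2 i
      simp only [Fin.val_succ]
      exact hgenval i.1 i.2
  choose Φ hΦmem hΦ0 hΦgen using key
  have hinj : Function.Injective Φ := by
    intro v v' he
    have h0 : v.1 = v'.1 := by rw [← hΦ0 v, ← hΦ0 v', he]
    have h2 : v.2 = v'.2 := funext fun i => by rw [← hΦgen v i, ← hΦgen v' i, he]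
    exact Prod.ext h0 h2
  calc n^(t+1) = Fintype.card (Fin n × ({i : Fin (2*t) // IsGen w i} → Fin n)) := by
        rw [Fintype.card_prod, Fintype.card_fun, hcard, Fintype.card_fin]
        ring
    _ = (Set.univ : Set (Fin n × ({i : Fin (2*t) // IsGen w i} → Fin n))).ncard := by
        rw [Set.ncard_univ, Nat.card_eq_fintype_card]
    _ ≤ (toepStar t n w).ncard :=
        Set.ncard_le_ncard_of_injOn Φ (fun a _ => hΦmem a) hinj.injOn (Set.toFinite _)
noncomputable def Dlink {t n : ℕ} (π : Fin (2*t+1) → Fin n) (i : Fin (2*t)) : ℤ :=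
  (π i.castSucc : ℤ) - (π i.succ : ℤ)

noncomputable def sigOf {t n : ℕ} (w : Fin (2*t) → ℕ) (π : Fin (2*t+1) → Fin n) :
    Fin (2*t) → Bool := fun j =>
  decide (¬ IsGen w j ∧ Dlink π j = Dlink π (partner w j) ∧ Dlink π j ≠ 0)

def Useps (t n : ℕ) (w : Fin (2*t) → ℕ) (ε : Fin (2*t) → Bool) :
    Set (Fin (2*t+1) → Fin n) :=
  {π | π ∈ toepStar t n w ∧ sigOf w π = ε}

section Upper

variable {t n : ℕ} {w : Fin (2*t) → ℕ}

lemma toep_natAbs {π : Fin (2*t+1) → Fin n} (hπ : π ∈ toepStar t n w)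
    {i j : Fin (2*t)} (hij : w i = w j) :
    (Dlink π i).natAbs = (Dlink π j).natAbs := hπ.2 i j hij

lemma sig_true {π : Fin (2*t+1) → Fin n} {j : Fin (2*t)}
    (h : sigOf w π j = true) :
    ¬ IsGen w j ∧ Dlink π j = Dlink π (partner w j) ∧ Dlink π j ≠ 0 := by
  simpa [sigOf] using h

lemma sig_gen_false {π : Fin (2*t+1) → Fin n} {j : Fin (2*t)}
    (h : IsGen w j) : sigOf w π j = false := by
  simp [sigOf, h]

lemma sig_false (hw : PairMatched w) {π : Fin (2*t+1) → Fin n}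
    (hπ : π ∈ toepStar t n w) {j : Fin (2*t)}
    (h : sigOf w π j = false) (hg : ¬ IsGen w j) :
    Dlink π j = - Dlink π (partner w j) := by
  have habs := toep_natAbs hπ (partner_eq hw j).symm
  rw [Int.natAbs_eq_natAbs_iff] at habs
  have h' : Dlink π j = Dlink π (partner w j) → Dlink π j = 0 := by
    intro hd
    by_contra hne
    have hT : sigOf w π j = true := by
      unfold sigOf
      rw [decide_eq_true_eq]
      exact ⟨hg, hd, hne⟩
    rw [h] at hT
    exact Bool.noConfusion hT
  rcases habs with h1 | h1
  · have := h' h1; omega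
  · omega

lemma dlink_natAbs_lt (hn : 0 < n) (π : Fin (2*t+1) → Fin n) (i : Fin (2*t)) :
    (Dlink π i).natAbs < n := by
  have h1 := (π i.castSucc).isLt
  have h2 := (π i.succ).isLt
  unfold Dlink
  omega

lemma det_gen (hw : PairMatched w) {ε : Fin (2*t) → Bool}
    {π π' : Fin (2*t+1) → Fin n} (hπ : π ∈ Useps t n w ε) (hπ' : π' ∈ Useps t n w ε)
    (h0 : π 0 = π' 0)
    (hstep : ∀ j : Fin (2*t), IsGen w j →
      (∀ m : Fin (2*t+1), (m : ℕ) ≤ (j : ℕ) → π m = π' m) → π j.succ = π' j.succ) :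
    π = π' := by
  suffices h : ∀ N, ∀ m : Fin (2*t+1), (m : ℕ) ≤ N → π m = π' m by
    funext m; exact h (2*t+1) m (by omega)
  intro N
  induction N with
  | zero =>
    intro m hm
    have : m = 0 := Fin.ext (by simp only [Fin.val_zero]; omega)
    rw [this]; exact h0
  | succ N ih =>
    intro m hm
    by_cases hm' : (m : ℕ) ≤ N
    · exact ih m hm'
    have hmN : (m : ℕ) = N + 1 := by omega
    have hN2t : N < 2*t := by have := m.isLt; omega
    set jj : Fin (2*t) := ⟨N, hN2t⟩ with hjj
    have hmsucc : m = jj.succ := Fin.ext (by simp [hjj, hmN])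
    by_cases hg : IsGen w jj
    · rw [hmsucc]; exact hstep jj hg (fun m' hm' => ih m' (by simpa [hjj] using hm'))
    · have hplt : partner w jj < jj := (not_isGen_iff hw jj).1 hg
      have hpv : ((partner w jj : Fin (2*t)) : ℕ) < N := by
        simpa [hjj, Fin.lt_def] using hplt
      have hDq : Dlink π (partner w jj) = Dlink π' (partner w jj) := by
        unfold Dlink
        rw [ih (partner w jj).castSucc (by simp [Fin.coe_castSucc]; omega),
          ih (partner w jj).succ (by simp [Fin.val_succ]; omega)]
      have hDj : Dlink π jj = Dlink π' jj := by
        rcases hb : ε jj with _ | _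
        · rw [sig_false hw hπ.1 (by rw [hπ.2]; exact hb) hg,
            sig_false hw hπ'.1 (by rw [hπ'.2]; exact hb) hg, hDq]
        · obtain ⟨_, he, _⟩ := sig_true (by rw [hπ.2]; exact hb)
          obtain ⟨_, he', _⟩ := sig_true (by rw [hπ'.2]; exact hb)
          rw [he, he', hDq]
      have hcs : π jj.castSucc = π' jj.castSucc := ih jj.castSucc (by simp [hjj])
      have hval : ((π m : ℕ) : ℤ) = ((π' m : ℕ) : ℤ) := by
        have h1 : ((π jj.castSucc : ℕ) : ℤ) = ((π' jj.castSucc : ℕ) : ℤ) := by rw [hcs]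
        unfold Dlink at hDj
        rw [hmsucc]
        omega
      exact Fin.ext (by exact_mod_cast hval)

lemma sum_dlink {π : Fin (2*t+1) → Fin n} (hπ : π ∈ toepStar t n w) :
    ∑ i : Fin (2*t), Dlink π i = 0 := by
  classical
  set g : ℕ → ℤ := fun m => ((π ⟨m % (2*t+1), Nat.mod_lt _ (by omega)⟩ : ℕ) : ℤ) with hg
  have hterm : ∀ i : Fin (2*t), Dlink π i = (fun m => g m - g (m+1)) ((i : ℕ)) := by
    intro i
    have h1 : (i : ℕ) % (2*t+1) = (i : ℕ) := Nat.mod_eq_of_lt (by have := i.isLt; omega)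
    have h2 : ((i : ℕ) + 1) % (2*t+1) = (i : ℕ) + 1 :=
      Nat.mod_eq_of_lt (by have := i.isLt; omega)
    have e1 : (⟨(i : ℕ) % (2*t+1), Nat.mod_lt _ (by omega)⟩ : Fin (2*t+1)) = i.castSucc :=
      Fin.ext (by simp [h1])
    have e2 : (⟨((i : ℕ)+1) % (2*t+1), Nat.mod_lt _ (by omega)⟩ : Fin (2*t+1)) = i.succ :=
      Fin.ext (by simp [h2])
    simp only [hg, e1, e2]
    rfl
  have hsum : ∑ i : Fin (2*t), Dlink π i
      = ∑ i : Fin (2*t), (fun m => g m - g (m+1)) ((i : ℕ)) :=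
    Finset.sum_congr rfl (fun i _ => hterm i)
  have hsum2 := Fin.sum_univ_eq_sum_range (fun m => g m - g (m+1)) (2*t)
  rw [hsum, hsum2, Finset.sum_range_sub']
  have e0 : (⟨0 % (2*t+1), Nat.mod_lt _ (by omega)⟩ : Fin (2*t+1)) = 0 :=
    Fin.ext (by simp)
  have elast : (⟨(2*t) % (2*t+1), Nat.mod_lt _ (by omega)⟩ : Fin (2*t+1)) = Fin.last (2*t) :=
    Fin.ext (by simp [Nat.mod_eq_of_lt])
  simp only [hg, e0, elast, hπ.1]
  ring

lemma sum_P (hw : PairMatched w) {ε : Fin (2*t) → Bool}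
    {π : Fin (2*t+1) → Fin n} (hπ : π ∈ Useps t n w ε) :
    ∑ i ∈ Finset.univ.filter (fun i => IsGen w i ∧ ε (partner w i) = true),
      Dlink π i = 0 := by
  classical
  have htot := sum_dlink hπ.1
  rw [← Finset.sum_filter_add_sum_filter_not Finset.univ (fun i => IsGen w i)] at htot
  have hre : ∑ j ∈ Finset.univ.filter (fun j => ¬ IsGen w j), Dlink π j
      = ∑ i ∈ Finset.univ.filter (fun i => IsGen w i),
          (if ε (partner w i) = true then Dlink π i else - Dlink π i) := by
    apply Finset.sum_nbij' (i := fun j => partner w j) (j := fun i => partner w i)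
    · intro a ha
      simp only [Finset.mem_filter, Finset.mem_univ, true_and] at ha ⊢
      exact isGen_partner hw ha
    · intro a ha
      simp only [Finset.mem_filter, Finset.mem_univ, true_and] at ha ⊢
      exact not_isGen_partner hw ha
    · intro a _; exact partner_partner hw a
    · intro a _; exact partner_partner hw a
    · intro a ha
      simp only [Finset.mem_filter, Finset.mem_univ, true_and] at ha
      rw [partner_partner hw a]
      rcases hb : ε a with _ | _
      · rw [if_neg (by simp [hb]), sig_false hw hπ.1 (by rw [hπ.2]; exact hb) ha]
      · obtain ⟨_, he, _⟩ := sig_true (w := w) (π := π) (by rw [hπ.2]; exact hb)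
        rw [if_pos (by simp [hb]), he]
  rw [hre] at htot
  rw [← Finset.sum_add_distrib] at htot
  have hsplit : ∀ i ∈ Finset.univ.filter (fun i => IsGen w i),
      Dlink π i + (if ε (partner w i) = true then Dlink π i else - Dlink π i)
        = if IsGen w i ∧ ε (partner w i) = true then 2 * Dlink π i else 0 := by
    intro i hi
    simp only [Finset.mem_filter, Finset.mem_univ, true_and] at hi
    by_cases hb : ε (partner w i) = true
    · rw [if_pos hb, if_pos ⟨hi, hb⟩]; ring
    · rw [if_neg hb, if_neg (by tauto)]; ring
  rw [Finset.sum_congr rfl hsplit] at htot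
  have h1 : ∑ i ∈ Finset.univ.filter (fun i => IsGen w i),
      (if IsGen w i ∧ ε (partner w i) = true then 2 * Dlink π i else 0)
      = ∑ i ∈ Finset.univ.filter (fun i => IsGen w i ∧ ε (partner w i) = true),
          2 * Dlink π i := by
    rw [Finset.sum_filter, Finset.sum_filter]
    apply Finset.sum_congr rfl
    intro i _
    by_cases hg : IsGen w i <;> by_cases hb : ε (partner w i) = true <;> simp [hg, hb]
  rw [h1, ← Finset.mul_sum] at htot
  omega

end Upper
section Count

variable {t n : ℕ} {w : Fin (2*t) → ℕ}

lemma U_bound0 (hw : PairMatched w) :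
    (Useps t n w (fun _ => false)).ncard ≤ n^(t+1) := by
  classical
  set Ψ : (Fin (2*t+1) → Fin n) → Fin n × ({i : Fin (2*t) // IsGen w i} → Fin n) :=
    fun π => (π 0, fun i => π i.1.succ) with hΨ
  have hinj : Set.InjOn Ψ (Useps t n w (fun _ => false)) := by
    intro π hπ π' hπ' he
    simp only [hΨ, Prod.mk.injEq] at he
    refine det_gen hw hπ hπ' he.1 ?_
    intro j hg _
    exact congrFun he.2 ⟨j, hg⟩
  calc (Useps t n w (fun _ => false)).ncard
      ≤ (Set.univ : Set (Fin n × ({i : Fin (2*t) // IsGen w i} → Fin n))).ncard :=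
        Set.ncard_le_ncard_of_injOn Ψ (fun a _ => Set.mem_univ _) hinj (Set.toFinite _)
    _ = n^(t+1) := by
        rw [Set.ncard_univ, Nat.card_eq_fintype_card, Fintype.card_prod,
          Fintype.card_fun, Fintype.card_subtype, card_gen hw, Fintype.card_fin]
        ring

lemma U_boundB (hw : PairMatched w) (hn : 0 < n) (ε : Fin (2*t) → Bool)
    (j₀ : Fin (2*t)) (hj₀ : ¬ IsGen w j₀) (hε : ε j₀ = true) :
    (Useps t n w ε).ncard ≤ 2^t * n^t := by
  classical
  set i₀ := partner w j₀ with hi₀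
  have hgi₀ : IsGen w i₀ := isGen_partner hw hj₀
  have hpi₀ : partner w i₀ = j₀ := partner_partner hw j₀
  have ht1 : 1 ≤ t := by
    rcases Nat.eq_zero_or_pos t with rfl | h
    · exact absurd j₀.isLt (by omega)
    · exact h
  set P := Finset.univ.filter (fun i => IsGen w i ∧ ε (partner w i) = true) with hP
  have hi₀P : i₀ ∈ P := by
    simp only [hP, Finset.mem_filter, Finset.mem_univ, true_and]
    exact ⟨hgi₀, by rw [hpi₀]; exact hε⟩
  -- the D values off i₀ determine everything
  have hDdet : ∀ (π π' : Fin (2*t+1) → Fin n), π ∈ Useps t n w ε → π' ∈ Useps t n w ε →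
      (∀ i : Fin (2*t), IsGen w i → i ≠ i₀ → Dlink π i = Dlink π' i) →
      ∀ i : Fin (2*t), IsGen w i → Dlink π i = Dlink π' i := by
    intro π π' hπ hπ' hD i hg
    by_cases hii : i = i₀
    · subst hii
      have h1 := sum_P hw hπ
      have h2 := sum_P hw hπ'
      rw [← hP] at h1 h2
      rw [← Finset.add_sum_erase _ _ hi₀P] at h1 h2
      have h3 : ∑ x ∈ P.erase i₀, Dlink π x = ∑ x ∈ P.erase i₀, Dlink π' x := by
        apply Finset.sum_congr rfl
        intro x hx
        rw [Finset.mem_erase, hP, Finset.mem_filter] at hx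
        exact hD x hx.2.2.1 hx.1
      omega
    · exact hD i hg hii
  set Ψ : (Fin (2*t+1) → Fin n) →
      Fin n × ({i : Fin (2*t) // IsGen w i ∧ i ≠ i₀} → Fin n × Bool) :=
    fun π => (π 0, fun i =>
      (⟨(Dlink π i.1).natAbs % n, Nat.mod_lt _ hn⟩, decide (0 ≤ Dlink π i.1))) with hΨ
  have hinj : Set.InjOn Ψ (Useps t n w ε) := by
    intro π hπ π' hπ' he
    simp only [hΨ, Prod.mk.injEq] at he
    have hD : ∀ i : Fin (2*t), IsGen w i → i ≠ i₀ → Dlink π i = Dlink π' i := by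
      intro i hg hne
      have hc := congrFun he.2 ⟨i, hg, hne⟩
      simp only [Prod.mk.injEq, Fin.mk.injEq] at hc
      have ha1 : (Dlink π i).natAbs % n = (Dlink π i).natAbs :=
        Nat.mod_eq_of_lt (dlink_natAbs_lt hn π i)
      have ha2 : (Dlink π' i).natAbs % n = (Dlink π' i).natAbs :=
        Nat.mod_eq_of_lt (dlink_natAbs_lt hn π' i)
      have habs : (Dlink π i).natAbs = (Dlink π' i).natAbs := by
        rw [← ha1, ← ha2]; exact hc.1
      have hsgn : (0 ≤ Dlink π i) ↔ (0 ≤ Dlink π' i) := by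
        have := hc.2
        rw [decide_eq_decide] at this
        exact this
      omega
    have hDall := hDdet π π' hπ hπ' hD
    refine det_gen hw hπ hπ' he.1 ?_
    intro j hg hIH
    have hcs : π j.castSucc = π' j.castSucc := hIH j.castSucc (by simp)
    have hDj := hDall j hg
    have h1 : ((π j.castSucc : ℕ) : ℤ) = ((π' j.castSucc : ℕ) : ℤ) := by rw [hcs]
    unfold Dlink at hDj
    exact Fin.ext (by omega)
  have hcard' : Fintype.card {i : Fin (2*t) // IsGen w i ∧ i ≠ i₀} = t - 1 := by
    rw [Fintype.card_subtype]
    have hfe : Finset.univ.filter (fun i => IsGen w i ∧ i ≠ i₀)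
        = (Finset.univ.filter (fun i => IsGen w i)).erase i₀ := by
      ext x
      simp only [Finset.mem_filter, Finset.mem_univ, true_and, Finset.mem_erase]
      tauto
    rw [hfe, Finset.card_erase_of_mem (by simp [hgi₀]), card_gen hw]
  calc (Useps t n w ε).ncard
      ≤ (Set.univ : Set (Fin n ×
          ({i : Fin (2*t) // IsGen w i ∧ i ≠ i₀} → Fin n × Bool))).ncard :=
        Set.ncard_le_ncard_of_injOn Ψ (fun a _ => Set.mem_univ _) hinj (Set.toFinite _)
    _ = n * (n * 2)^(t-1) := by
        rw [Set.ncard_univ, Nat.card_eq_fintype_card, Fintype.card_prod,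
          Fintype.card_fun, hcard', Fintype.card_prod, Fintype.card_fin,
          Fintype.card_bool]
    _ ≤ 2^t * n^t := by
        obtain ⟨s, rfl⟩ : ∃ s, t = s + 1 := ⟨t - 1, by omega⟩
        simp only [Nat.add_sub_cancel]
        calc n * (n * 2)^s = 2^s * n^(s+1) := by rw [mul_pow]; ring
          _ ≤ 2^(s+1) * n^(s+1) := by
              apply Nat.mul_le_mul_right
              exact Nat.pow_le_pow_right (by omega) (by omega)

lemma upper_bound (hw : PairMatched w) (hn : 0 < n) :
    (toepStar t n w).ncard ≤ n^(t+1) + 8^t * n^t := by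
  classical
  set ε₀ : Fin (2*t) → Bool := fun _ => false with hε₀
  have hcov : toepStar t n w ⊆
      ⋃ ε ∈ (Finset.univ : Finset (Fin (2*t) → Bool)), Useps t n w ε := by
    intro π hπ
    refine Set.mem_biUnion (Finset.mem_univ (sigOf w π)) ?_
    exact ⟨hπ, rfl⟩
  have h1 : (toepStar t n w).ncard ≤ ∑ ε : Fin (2*t) → Bool, (Useps t n w ε).ncard :=
    le_trans (Set.ncard_le_ncard hcov (Set.toFinite _))
      (ncard_biUnion_le _ _ (fun _ => Set.toFinite _))
  rw [← Finset.add_sum_erase _ _ (Finset.mem_univ ε₀)] at h1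
  have h2 : ∀ ε ∈ Finset.univ.erase ε₀, (Useps t n w ε).ncard ≤ 2^t * n^t := by
    intro ε hεm
    have hne : ε ≠ ε₀ := (Finset.mem_erase.1 hεm).1
    by_cases hbad : ∃ j, ¬ IsGen w j ∧ ε j = true
    · obtain ⟨j₀, hj₀, hj₀'⟩ := hbad
      exact U_boundB hw hn ε j₀ hj₀ hj₀'
    · push_neg at hbad
      have hem : Useps t n w ε = ∅ := by
        ext π
        simp only [Set.mem_empty_iff_false, iff_false]
        intro hπ
        apply hne
        funext j
        rw [← hπ.2, hε₀]
        by_cases hg : IsGen w j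
        · exact sig_gen_false hg
        · rcases hb : sigOf w π j with _ | _
          · rfl
          · exfalso
            have : ε j = true := by rw [← hπ.2]; exact hb
            exact (hbad j hg).elim (by simp [this])
      rw [hem]
      simp
  have h3 : ∑ ε ∈ Finset.univ.erase ε₀, (Useps t n w ε).ncard
      ≤ 8^t * n^t := by
    calc ∑ ε ∈ Finset.univ.erase ε₀, (Useps t n w ε).ncard
        ≤ (Finset.univ.erase ε₀).card * (2^t * n^t) := by
          simpa using Finset.sum_le_card_nsmul _ _ _ h2
      _ ≤ 2^(2*t) * (2^t * n^t) := by
          apply Nat.mul_le_mul_right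
          calc (Finset.univ.erase ε₀).card ≤ Finset.univ.card :=
                Finset.card_le_card (Finset.erase_subset _ _)
            _ = 2^(2*t) := by
                rw [Finset.card_univ, Fintype.card_fun, Fintype.card_bool,
                  Fintype.card_fin]
      _ = 8^t * n^t := by
          rw [← mul_assoc, pow_mul, ← mul_pow]
          norm_num
  have h4 := U_bound0 (n := n) hw
  rw [← hε₀] at h4
  omega

end Count
/-- For any Catalan word `w` of length `2t`,
`#Π*_{L_T,n}(w)/n^{t+1} → 1` as `n → ∞`. -/
theorem toepStar_catalan_limit (t : ℕ) (w : Fin (2 * t) → ℕ)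
    (hw : PairMatched w) (hc : CatalanWord w) :
    Tendsto (fun n : ℕ => ((toepStar t n w).ncard : ℝ) / (n : ℝ) ^ (t + 1))
      atTop (nhds 1) := by
  apply tendsto_of_tendsto_of_tendsto_of_le_of_le'
    (g := fun _ : ℕ => (1:ℝ)) (h := fun n : ℕ => 1 + (8^t : ℝ)/n)
    tendsto_const_nhds
  · have h : Tendsto (fun n : ℕ => 1 + (8^t : ℝ)/n) atTop (nhds (1+0)) :=
      Tendsto.add tendsto_const_nhds (tendsto_const_div_atTop_nhds_zero_nat _)
    simpa using h
  · filter_upwards [Filter.eventually_ge_atTop 1] with n hn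
    have hlb := lower_bound t n w hw hc
    have hnpos : (0:ℝ) < (n:ℝ)^(t+1) := by
      have : (0:ℝ) < (n:ℝ) := by exact_mod_cast hn
      positivity
    rw [le_div_iff₀ hnpos, one_mul]
    calc (n:ℝ)^(t+1) = ((n^(t+1) : ℕ) : ℝ) := by push_cast; ring
      _ ≤ _ := Nat.cast_le.2 hlb
  · filter_upwards [Filter.eventually_ge_atTop 1] with n hn
    have hub := upper_bound (t := t) (n := n) (w := w) hw (by omega)
    have hnpos : (0:ℝ) < (n:ℝ) := by exact_mod_cast hn
    have hppos : (0:ℝ) < (n:ℝ)^(t+1) := by positivity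
    rw [div_le_iff₀ hppos]
    have hiden : ((1:ℝ) + 8^t/n) * (n:ℝ)^(t+1) = (n:ℝ)^(t+1) + 8^t * (n:ℝ)^t := by
      field_simp
      ring
    rw [hiden]
    calc ((toepStar t n w).ncard : ℝ) ≤ ((n^(t+1) + 8^t*n^t : ℕ) : ℝ) :=
          Nat.cast_le.2 hub
      _ = (n:ℝ)^(t+1) + 8^t*(n:ℝ)^t := by push_cast; ring
end

section
/- For any pair-matched word w of length 2t, lim_{k→∞} #Π*_{L_T,k,l_0}(w)/k^{t+1} = lim_{k→∞} #Π*_{L_T,k}(w)/k^{t+1} = p_T(w), where l_0 = (−1,...,−1). -/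
open Filter Topology

namespace ToepAux
variable {t : ℕ} (w : Fin (2 * t) → ℕ)

noncomputable def partner (i : Fin (2 * t)) : Fin (2 * t) :=
  if h : ((Finset.univ.filter fun j => w j = w i).erase i).Nonempty
  then ((Finset.univ.filter fun j => w j = w i).erase i).min' h else i


section S1
variable (hw : PairMatched w)
include hw

lemma partner_mem (i : Fin (2 * t)) :
    partner w i ∈ (Finset.univ.filter fun j => w j = w i).erase i := by
  have h1 : ((Finset.univ.filter fun j => w j = w i).erase i).Nonempty := by
    rw [← Finset.card_pos, Finset.card_erase_of_mem (by simp), hw i]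
    omega
  rw [partner, dif_pos h1]
  exact Finset.min'_mem _ h1

lemma partner_ne (i : Fin (2 * t)) : partner w i ≠ i :=
  Finset.ne_of_mem_erase (partner_mem w hw i)

lemma w_partner (i : Fin (2 * t)) : w (partner w i) = w i := by
  have := partner_mem w hw i
  simp only [Finset.mem_erase, Finset.mem_filter] at this
  exact this.2.2

lemma eq_partner {i j : Fin (2 * t)} (hne : j ≠ i) (hww : w j = w i) :
    j = partner w i := by
  by_contra hc
  have hcard : ({i, j, partner w i} : Finset (Fin (2 * t))).card = 3 := by
    rw [Finset.card_insert_of_notMem (by simp [Ne.symm hne, (partner_ne w hw i).symm, hc]),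
      Finset.card_insert_of_notMem (by simpa using hc), Finset.card_singleton]
  have hsub : ({i, j, partner w i} : Finset (Fin (2 * t))) ⊆
      Finset.univ.filter fun j => w j = w i := by
    intro x hx
    simp only [Finset.mem_insert, Finset.mem_singleton] at hx
    rcases hx with rfl | rfl | rfl <;> simp [hww, w_partner w hw]
  have := Finset.card_le_card hsub
  rw [hcard, hw i] at this
  omega

lemma partner_partner (i : Fin (2 * t)) : partner w (partner w i) = i :=
  (eq_partner w hw (partner_ne w hw i).symm (w_partner w hw i).symm).symm

lemma gen_or_gen_partner (i : Fin (2 * t)) :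
    i < partner w i ∨ partner w i < partner w (partner w i) := by
  rcases lt_or_gt_of_ne (partner_ne w hw i) with h | h
  · right; rwa [partner_partner w hw]
  · left; exact h

lemma isGen_iff (i : Fin (2 * t)) :
    (∀ j, w j = w i → i ≤ j) ↔ i < partner w i := by
  constructor
  · intro h
    exact lt_of_le_of_ne (h _ (w_partner w hw i)) (Ne.symm (partner_ne w hw i))
  · intro h j hj
    rcases eq_or_ne j i with rfl | hne
    · exact le_refl _
    · rw [eq_partner w hw hne hj]; exact h.le

lemma card_V : Fintype.card {i : Fin (2 * t) // i < partner w i} = t := by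
  rw [Fintype.card_subtype]
  have hbij : (Finset.univ.filter fun i : Fin (2 * t) => i < partner w i).card =
      (Finset.univ.filter fun i : Fin (2 * t) => ¬ i < partner w i).card := by
    apply Finset.card_bij (fun i _ => partner w i)
    · intro a ha
      simp only [Finset.mem_filter, Finset.mem_univ, true_and] at ha ⊢
      rw [partner_partner w hw]
      omega
    · intro a ha b hb hab
      have := congrArg (partner w) hab
      rwa [partner_partner w hw, partner_partner w hw] at this
    · intro b hb
      refine ⟨partner w b, ?_, partner_partner w hw b⟩
      simp only [Finset.mem_filter, Finset.mem_univ, true_and] at hb ⊢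
      rw [partner_partner w hw]
      rcases lt_or_gt_of_ne (partner_ne w hw b) with h | h
      · exact h
      · exact absurd h hb
  have := Finset.card_filter_add_card_filter_not
    (s := (Finset.univ : Finset (Fin (2 * t)))) (p := fun i => i < partner w i)
  rw [Finset.card_univ, Fintype.card_fin] at this
  omega


end S1

section S2
abbrev V := {i : Fin (2 * t) // i < partner w i}

noncomputable def uu (d : V w → ℤ) (i : Fin (2 * t)) : ℤ :=
  if h : i < partner w i then d ⟨i, h⟩
  else if h2 : partner w i < partner w (partner w i) then - d ⟨partner w i, h2⟩ else 0

noncomputable def P (d : V w → ℤ) (m : ℕ) : ℤ :=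
  ∑ i ∈ Finset.univ.filter (fun i : Fin (2 * t) => (i : ℕ) < m), uu w d i

lemma uu_add (d e : V w → ℤ) (i : Fin (2 * t)) :
    uu w (d + e) i = uu w d i + uu w e i := by
  unfold uu
  split <;> [skip; split] <;> simp <;> ring

lemma uu_smul (c : ℤ) (d : V w → ℤ) (i : Fin (2 * t)) :
    uu w (fun v => c * d v) i = c * uu w d i := by
  unfold uu
  split <;> [skip; split] <;> simp <;> ring

lemma P_add (d e : V w → ℤ) (m : ℕ) : P w (d + e) m = P w d m + P w e m := by
  unfold P
  rw [← Finset.sum_add_distrib]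
  exact Finset.sum_congr rfl fun i _ => uu_add w d e i

lemma P_smul (c : ℤ) (d : V w → ℤ) (m : ℕ) :
    P w (fun v => c * d v) m = c * P w d m := by
  unfold P
  rw [Finset.mul_sum]
  exact Finset.sum_congr rfl fun i _ => uu_smul w c d i

lemma P_zero (d : V w → ℤ) : P w d 0 = 0 := by
  unfold P
  rw [Finset.filter_false_of_mem (by intro i _; omega), Finset.sum_empty]

lemma filter_lt_succ {N : ℕ} (i : Fin N) :
    Finset.univ.filter (fun j : Fin N => (j : ℕ) < (i : ℕ) + 1)
      = insert i (Finset.univ.filter fun j : Fin N => (j : ℕ) < (i : ℕ)) := by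
  ext j
  simp only [Finset.mem_filter, Finset.mem_univ, true_and, Finset.mem_insert, Fin.ext_iff]
  omega

lemma P_succ (d : V w → ℤ) (i : Fin (2 * t)) :
    P w d ((i : ℕ) + 1) = P w d i + uu w d i := by
  unfold P
  rw [filter_lt_succ, Finset.sum_insert (by simp), add_comm]

lemma uu_gen (d : V w → ℤ) (v : V w) : uu w d v.1 = d v := by
  unfold uu
  rw [dif_pos v.2]

variable (hw : PairMatched w)
include hw

lemma uu_partner (d : V w → ℤ) (i : Fin (2 * t)) :
    uu w d (partner w i) = - uu w d i := by
  rcases lt_or_gt_of_ne (partner_ne w hw i) with h | h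
  · -- partner w i < i, so i = partner (partner i) is not gen; partner i is gen
    have hg : partner w i < partner w (partner w i) := by
      rwa [partner_partner w hw]
    have hni : ¬ i < partner w i := by omega
    unfold uu
    rw [dif_pos hg, dif_neg hni, dif_pos hg]
    ring
  · -- i is gen
    have hg : i < partner w i := h
    have hn : ¬ partner w i < partner w (partner w i) := by
      rw [partner_partner w hw]; omega
    have hpp := partner_partner w hw i
    have h2 : partner w (partner w i) < partner w (partner w (partner w i)) := by
      rw [hpp]; exact hg
    unfold uu
    rw [dif_neg hn, dif_pos h2, dif_pos hg, neg_inj]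
    congr 1
    exact Subtype.ext hpp

lemma sum_uu_zero (d : V w → ℤ) : ∑ i, uu w d i = 0 := by
  apply Finset.sum_ninvolution (partner w)
  · intro a
    rw [uu_partner w hw]; ring
  · intro a _
    exact partner_ne w hw a
  · intro a; exact Finset.mem_univ _
  · intro a; exact partner_partner w hw a

lemma P_top (d : V w → ℤ) : P w d (2 * t) = 0 := by
  unfold P
  rw [Finset.filter_true_of_mem (by intro i _; exact i.2), ← sum_uu_zero w hw d]

omit hw

noncomputable def Rmax (d : V w → ℤ) : ℤ :=
  ((Finset.range (2 * t + 1)).image (P w d)).max'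
    ((Finset.nonempty_range_iff.2 (by omega)).image _)

noncomputable def Rmin (d : V w → ℤ) : ℤ :=
  ((Finset.range (2 * t + 1)).image (P w d)).min'
    ((Finset.nonempty_range_iff.2 (by omega)).image _)

noncomputable def Rq (d : V w → ℤ) : ℤ := Rmax w d - Rmin w d

lemma P_le_Rmax (d : V w → ℤ) {m : ℕ} (hm : m < 2 * t + 1) : P w d m ≤ Rmax w d :=
  Finset.le_max' _ _ (Finset.mem_image_of_mem _ (Finset.mem_range.2 hm))

lemma Rmin_le_P (d : V w → ℤ) {m : ℕ} (hm : m < 2 * t + 1) : Rmin w d ≤ P w d m :=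
  Finset.min'_le _ _ (Finset.mem_image_of_mem _ (Finset.mem_range.2 hm))

lemma Rmax_le (d : V w → ℤ) {c : ℤ} (h : ∀ m < 2 * t + 1, P w d m ≤ c) : Rmax w d ≤ c :=
  Finset.max'_le _ _ _ (by
    intro y hy
    obtain ⟨m, hm, rfl⟩ := Finset.mem_image.1 hy
    exact h m (Finset.mem_range.1 hm))

lemma le_Rmin (d : V w → ℤ) {c : ℤ} (h : ∀ m < 2 * t + 1, c ≤ P w d m) : c ≤ Rmin w d :=
  Finset.le_min' _ _ _ (by
    intro y hy
    obtain ⟨m, hm, rfl⟩ := Finset.mem_image.1 hy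
    exact h m (Finset.mem_range.1 hm))

lemma Rmax_nonneg (d : V w → ℤ) : 0 ≤ Rmax w d := by
  have := P_le_Rmax w d (m := 0) (by omega)
  rwa [P_zero] at this

lemma Rmin_nonpos (d : V w → ℤ) : Rmin w d ≤ 0 := by
  have := Rmin_le_P w d (m := 0) (by omega)
  rwa [P_zero] at this

lemma Rq_nonneg (d : V w → ℤ) : 0 ≤ Rq w d := by
  have h1 := Rmax_nonneg w d
  have h2 := Rmin_nonpos w d
  unfold Rq; omega

lemma Rq_add_le (d e : V w → ℤ) : Rq w (d + e) ≤ Rq w d + Rq w e := by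
  have h1 : Rmax w (d + e) ≤ Rmax w d + Rmax w e :=
    Rmax_le w _ (fun m hm => by
      rw [P_add]
      exact add_le_add (P_le_Rmax w d hm) (P_le_Rmax w e hm))
  have h2 : Rmin w d + Rmin w e ≤ Rmin w (d + e) :=
    le_Rmin w _ (fun m hm => by
      rw [P_add]
      exact add_le_add (Rmin_le_P w d hm) (Rmin_le_P w e hm))
  unfold Rq; omega

lemma Rq_neg (d : V w → ℤ) : Rq w (fun v => - d v) = Rq w d := by
  have hP : ∀ m, P w (fun v => - d v) m = - P w d m := by
    intro m
    have := P_smul w (-1) d m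
    simpa using this
  have h1 : Rmax w (fun v => - d v) = - Rmin w d := by
    apply le_antisymm
    · exact Rmax_le w _ (fun m hm => by rw [hP]; simp [Rmin_le_P w d hm])
    · have hmem : Rmin w d ∈ (Finset.range (2 * t + 1)).image (P w d) :=
        Finset.min'_mem _ _
      obtain ⟨m, hm, hPm⟩ := Finset.mem_image.1 hmem
      calc - Rmin w d = P w (fun v => - d v) m := by rw [← hPm, hP]
        _ ≤ _ := P_le_Rmax w _ (Finset.mem_range.1 hm)
  have h2 : Rmin w (fun v => - d v) = - Rmax w d := by
    apply le_antisymm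
    · have hmem : Rmax w d ∈ (Finset.range (2 * t + 1)).image (P w d) :=
        Finset.max'_mem _ _
      obtain ⟨m, hm, hPm⟩ := Finset.mem_image.1 hmem
      calc Rmin w (fun v => - d v) ≤ P w (fun v => - d v) m :=
            Rmin_le_P w _ (Finset.mem_range.1 hm)
        _ = - Rmax w d := by rw [hP, hPm]
    · exact le_Rmin w _ (fun m hm => by rw [hP]; simp [P_le_Rmax w d hm])
  unfold Rq
  rw [h1, h2]; ring

lemma Rq_sub_abs (a b : V w → ℤ) : |Rq w (a + b) - Rq w a| ≤ Rq w b := by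
  rw [abs_le]
  constructor
  · have : Rq w a ≤ Rq w (a + b) + Rq w b := by
      have h := Rq_add_le w (a + b) (fun v => - b v)
      have he : (a + b) + (fun v => - b v) = a := by funext v; simp
      rw [he, Rq_neg] at h
      exact h
    omega
  · have := Rq_add_le w a b
    omega

lemma Rq_smul (c : ℤ) (hc : 0 ≤ c) (d : V w → ℤ) :
    Rq w (fun v => c * d v) = c * Rq w d := by
  have himg : ((Finset.range (2 * t + 1)).image (P w (fun v => c * d v)))
      = ((Finset.range (2 * t + 1)).image (P w d)).image (fun x => c * x) := by
    rw [Finset.image_image]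
    exact Finset.image_congr (fun m _ => P_smul w c d m)
  have hmono : Monotone (fun x : ℤ => c * x) := fun x y h => mul_le_mul_of_nonneg_left h hc
  have h1 : Rmax w (fun v => c * d v) = c * Rmax w d := by
    rw [Rmax, Rmax]
    simp_rw [himg]
    exact Finset.max'_image hmono _ _
  have h2 : Rmin w (fun v => c * d v) = c * Rmin w d := by
    rw [Rmin, Rmin]
    simp_rw [himg]
    exact Finset.min'_image hmono _ _
  unfold Rq
  rw [h1, h2]; ring

lemma abs_P_le (d : V w → ℤ) {c : ℤ} (hc : 0 ≤ c) (hb : ∀ v, |d v| ≤ c) (m : ℕ) :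
    |P w d m| ≤ 2 * t * c := by
  have habs : ∀ i : Fin (2 * t), |uu w d i| ≤ c := by
    intro i
    unfold uu
    split
    · exact hb _
    · split
      · rw [abs_neg]; exact hb _
      · simpa using hc
  calc |P w d m| ≤ ∑ i ∈ Finset.univ.filter (fun i : Fin (2 * t) => (i : ℕ) < m), |uu w d i| :=
        Finset.abs_sum_le_sum_abs _ _
    _ ≤ ∑ _i ∈ Finset.univ.filter (fun i : Fin (2 * t) => (i : ℕ) < m), c :=
        Finset.sum_le_sum (fun i _ => habs i)
    _ = (Finset.univ.filter (fun i : Fin (2 * t) => (i : ℕ) < m)).card * c := by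
        rw [Finset.sum_const, nsmul_eq_mul]
    _ ≤ 2 * t * c := by
        have hcard : (Finset.univ.filter (fun i : Fin (2 * t) => (i : ℕ) < m)).card ≤ 2 * t := by
          calc _ ≤ (Finset.univ : Finset (Fin (2 * t))).card := Finset.card_le_card
                (Finset.filter_subset _ _)
            _ = 2 * t := by simp
        calc ((Finset.univ.filter (fun i : Fin (2 * t) => (i : ℕ) < m)).card : ℤ) * c
            ≤ (2 * t : ℕ) * c := mul_le_mul_of_nonneg_right (by exact_mod_cast hcard) hc
          _ = 2 * t * c := by push_cast; ring

lemma Rq_le_of_bound (d : V w → ℤ) {c : ℤ} (hc : 0 ≤ c) (hb : ∀ v, |d v| ≤ c) :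
    Rq w d ≤ 4 * t * c := by
  have h1 : Rmax w d ≤ 2 * t * c := Rmax_le w d (fun m _ => by
    have := abs_P_le w d hc hb m
    rw [abs_le] at this; exact this.2)
  have h2 : - (2 * t * c) ≤ Rmin w d := le_Rmin w d (fun m _ => by
    have := abs_P_le w d hc hb m
    rw [abs_le] at this; exact this.1)
  unfold Rq
  have : (4 : ℤ) * t * c = 2 * t * c + 2 * t * c := by ring
  omega

lemma abs_le_Rq (d : V w → ℤ) (v : V w) : |d v| ≤ Rq w d := by
  have h1 : P w d ((v.1 : ℕ) + 1) = P w d v.1 + d v := by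
    rw [P_succ, uu_gen]
  have hm1 : (v.1 : ℕ) + 1 < 2 * t + 1 := by have := v.1.2; omega
  have hm0 : (v.1 : ℕ) < 2 * t + 1 := by omega
  have ha := P_le_Rmax w d hm1
  have hb := Rmin_le_P w d hm1
  have hc := P_le_Rmax w d hm0
  have hd := Rmin_le_P w d hm0
  rw [abs_le]
  unfold Rq
  omega


end S2

section S3
/-- slope of a circuit at position i -/
def upi {k : ℕ} (π : Fin (2 * t + 1) → Fin k) (i : Fin (2 * t)) : ℤ :=
  (π i.castSucc : ℤ) - (π i.succ : ℤ)

noncomputable def dee {k : ℕ} (π : Fin (2 * t + 1) → Fin k) : V w → ℤ :=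
  fun v => upi π v.1

lemma tele {k : ℕ} (π : Fin (2 * t + 1) → Fin k) (m : Fin (2 * t + 1)) :
    (π 0 : ℤ) - (π m : ℤ)
      = ∑ i ∈ Finset.univ.filter (fun i : Fin (2 * t) => (i : ℕ) < (m : ℕ)), upi π i := by
  induction m using Fin.induction with
  | zero =>
      rw [Finset.filter_false_of_mem (by intro i _; simp), Finset.sum_empty]
      simp
  | succ i ih =>
      rw [Fin.val_succ, filter_lt_succ, Finset.sum_insert (by simp)]
      rw [Fin.coe_castSucc] at ih
      rw [← ih, upi]
      ring

variable (hw : PairMatched w)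
include hw

lemma mem_signed_iff {k : ℕ} (π : Fin (2 * t + 1) → Fin k) :
    π ∈ toepStarSigned t k w (fun _ => -1) ↔ ∀ i, upi π i = uu w (dee w π) i := by
  constructor
  · rintro ⟨⟨-, -⟩, hsign⟩ i
    by_cases h : i < partner w i
    · rw [show uu w (dee w π) i = dee w π ⟨i, h⟩ from uu_gen w _ ⟨i, h⟩]
      rfl
    · have hne := partner_ne w hw i
      have hgen : partner w i < partner w (partner w i) := by
        rw [partner_partner w hw]
        omega
      have hs := hsign (partner w i) i ((isGen_iff w hw _).2 hgen)
        hne ((w_partner w hw i).symm ▸ rfl)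
      have : upi π i = - upi π (partner w i) := by
        simp only at hs
        unfold upi
        linarith [hs]
      rw [this]
      unfold uu
      rw [dif_neg h, dif_pos hgen]
      rw [show dee w π ⟨partner w i, hgen⟩ = upi π (partner w i) from rfl]
  · intro hrep
    have habs : ∀ i j : Fin (2 * t), w i = w j →
        ((π i.castSucc : ℤ) - (π i.succ : ℤ)).natAbs
          = ((π j.castSucc : ℤ) - (π j.succ : ℤ)).natAbs := by
      intro i j hij
      rcases eq_or_ne j i with rfl | hne
      · rfl
      · rw [eq_partner w hw hne hij.symm]
        show (upi π i).natAbs = (upi π (partner w i)).natAbs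
        rw [hrep, hrep, uu_partner w hw, Int.natAbs_neg]
    refine ⟨⟨?_, habs⟩, ?_⟩
    · have h0 := tele π (Fin.last (2 * t))
      have hfull : Finset.univ.filter
          (fun i : Fin (2 * t) => (i : ℕ) < ((Fin.last (2 * t) : Fin (2 * t + 1)) : ℕ))
          = Finset.univ := by
        apply Finset.filter_true_of_mem
        intro i _
        rw [Fin.val_last]
        exact i.2
      rw [hfull] at h0
      have : ∑ i, upi π i = 0 := by
        rw [Finset.sum_congr rfl (fun i _ => hrep i)]
        exact sum_uu_zero w hw _
      rw [this] at h0
      have : (π 0 : ℤ) = (π (Fin.last (2 * t)) : ℤ) := by omega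
      exact Fin.ext (by exact_mod_cast this)
    · intro i j hgen hne hji
      have hg : i < partner w i := (isGen_iff w hw i).1 hgen
      have hj : j = partner w i := eq_partner w hw hne.symm hji
      show upi π i = -1 * upi π j
      rw [hj, hrep, hrep, uu_partner w hw]
      ring

omit hw

noncomputable def Dk (k : ℕ) : Finset (V w → ℤ) :=
  (Fintype.piFinset fun _ : V w => Finset.Icc (-(k : ℤ)) (k : ℤ)).filter
    fun d => Rq w d < (k : ℤ)

noncomputable def Nval (k : ℕ) : ℤ := ∑ d ∈ Dk w k, ((k : ℤ) - Rq w d)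

noncomputable def Ek (k : ℕ) : Finset (ℤ × (V w → ℤ)) :=
  (Dk w k).biUnion fun d =>
    (Finset.Icc (Rmax w d) ((k : ℤ) - 1 + Rmin w d)).image fun x => (x, d)

def Eset (k : ℕ) : Set (ℤ × (V w → ℤ)) :=
  {p | ∀ m < 2 * t + 1, 0 ≤ p.1 - P w p.2 m ∧ p.1 - P w p.2 m ≤ (k : ℤ) - 1}

lemma Eset_eq_Ek (k : ℕ) : Eset w k = ↑(Ek w k) := by
  ext ⟨x, d⟩
  simp only [Eset, Set.mem_setOf_eq, Ek, Finset.coe_biUnion, Set.mem_iUnion,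
    Finset.mem_coe, Finset.mem_image, Finset.mem_Icc]
  constructor
  · intro h
    have h1 : Rmax w d ≤ x := Rmax_le w d (fun m hm => by have := (h m hm).1; omega)
    have h2 : x - ((k : ℤ) - 1) ≤ Rmin w d := le_Rmin w d (fun m hm => by
      have := (h m hm).2; omega)
    have hRq : Rq w d < (k : ℤ) := by unfold Rq; omega
    have hd : d ∈ Dk w k := by
      rw [Dk, Finset.mem_filter]
      refine ⟨Fintype.mem_piFinset.2 fun v => ?_, hRq⟩
      have := abs_le_Rq w d v
      rw [Finset.mem_Icc, ← abs_le]
      omega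
    exact ⟨d, hd, x, ⟨h1, by omega⟩, rfl⟩
  · rintro ⟨d', hd', x', ⟨hx1, hx2⟩, heq⟩
    injection heq with h1 h2
    subst h1
    subst h2
    intro m hm
    have := P_le_Rmax w d' (m := m) hm
    have := Rmin_le_P w d' (m := m) hm
    omega

lemma card_Ek (k : ℕ) : ((Ek w k).card : ℤ) = Nval w k := by
  rw [Ek, Finset.card_biUnion]
  · rw [Nval]
    push_cast
    apply Finset.sum_congr rfl
    intro d hd
    rw [Finset.card_image_of_injective _ (fun a b hab => congrArg Prod.fst hab),
      Int.card_Icc]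
    rw [Dk, Finset.mem_filter] at hd
    have hRq := hd.2
    have : (k : ℤ) - 1 + Rmin w d + 1 - Rmax w d = (k : ℤ) - Rq w d := by
      unfold Rq; ring
    rw [this, Int.toNat_of_nonneg (by omega)]
  · intro d1 h1 d2 h2 hne
    simp only [Finset.disjoint_left, Finset.mem_image]
    rintro p ⟨x1, -, rfl⟩ ⟨x2, -, h⟩
    exact hne (congrArg Prod.snd h).symm

include hw

lemma count_signed (k : ℕ) :
    ((toepStarSigned t k w (fun _ => -1)).ncard : ℤ) = Nval w k := by
  classical
  set T := toepStarSigned t k w (fun _ => -1)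
  set Φ : (Fin (2 * t + 1) → Fin k) → ℤ × (V w → ℤ) := fun π => ((π 0 : ℤ), dee w π)
  have hmapsto : ∀ π ∈ T, Φ π ∈ Eset w k := by
    intro π hπ m hm
    have hrep := (mem_signed_iff w hw π).1 hπ
    have hP : P w (dee w π) m = (π 0 : ℤ) - (π ⟨m, hm⟩ : ℤ) := by
      rw [tele π ⟨m, hm⟩, P]
      exact (Finset.sum_congr rfl fun i _ => (hrep i).symm)
    have hb : 0 ≤ (π ⟨m, hm⟩ : ℤ) ∧ (π ⟨m, hm⟩ : ℤ) ≤ (k : ℤ) - 1 := by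
      have := (π ⟨m, hm⟩).2
      constructor
      · positivity
      · omega
    show 0 ≤ (π 0 : ℤ) - P w (dee w π) m ∧ (π 0 : ℤ) - P w (dee w π) m ≤ (k : ℤ) - 1
    rw [hP]
    omega
  have hinj : Set.InjOn Φ T := by
    intro π hπ ρ hρ heq
    have h0 : (π 0 : ℤ) = (ρ 0 : ℤ) := congrArg Prod.fst heq
    have hd : dee w π = dee w ρ := congrArg Prod.snd heq
    have hrep1 := (mem_signed_iff w hw π).1 hπ
    have hrep2 := (mem_signed_iff w hw ρ).1 hρ
    funext m
    have t1 := tele π m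
    have t2 := tele ρ m
    have hsum : ∀ i : Fin (2 * t), upi π i = upi ρ i := by
      intro i
      rw [hrep1, hrep2, hd]
    rw [Finset.sum_congr rfl (fun i _ => hsum i), ← t2] at t1
    have : (π m : ℤ) = (ρ m : ℤ) := by omega
    exact Fin.ext (by exact_mod_cast this)
  have hsurj : Eset w k ⊆ Φ '' T := by
    rintro ⟨x, d⟩ hp
    have hk1 : 1 ≤ (k : ℤ) := by
      have := hp 0 (by omega)
      rw [P_zero] at this
      omega
    have hbound : ∀ m : Fin (2 * t + 1), 0 ≤ x - P w d (m : ℕ)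
        ∧ x - P w d (m : ℕ) ≤ (k : ℤ) - 1 := fun m => hp (m : ℕ) m.2
    set π : Fin (2 * t + 1) → Fin k := fun m =>
      ⟨(x - P w d (m : ℕ)).toNat, by
        have h := hbound m
        omega⟩ with hπdef
    have hcoe : ∀ m : Fin (2 * t + 1), (π m : ℤ) = x - P w d (m : ℕ) := by
      intro m
      show ((x - P w d (m : ℕ)).toNat : ℤ) = x - P w d (m : ℕ)
      exact Int.toNat_of_nonneg (hbound m).1
    have hupi : ∀ i : Fin (2 * t), upi π i = uu w d i := by
      intro i
      rw [upi, hcoe, hcoe]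
      rw [show ((i.succ : Fin (2 * t + 1)) : ℕ) = (i : ℕ) + 1 from rfl,
        show ((i.castSucc : Fin (2 * t + 1)) : ℕ) = (i : ℕ) from rfl, P_succ]
      ring
    have hdee : dee w π = d := funext fun v => by rw [dee, hupi, uu_gen]
    refine ⟨π, (mem_signed_iff w hw π).2 (fun i => by rw [hupi, hdee]), ?_⟩
    have h0 : (π 0 : ℤ) = x := by
      have := hcoe 0
      rw [show ((0 : Fin (2 * t + 1)) : ℕ) = 0 from rfl, P_zero] at this
      omega
    show ((π 0 : ℤ), dee w π) = (x, d)
    rw [h0, hdee]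
  have himg : Φ '' T = Eset w k :=
    Set.Subset.antisymm (Set.image_subset_iff.2 hmapsto) hsurj
  calc ((toepStarSigned t k w (fun _ => -1)).ncard : ℤ) = (T.ncard : ℤ) := rfl
    _ = ((Φ '' T).ncard : ℤ) := by rw [Set.ncard_image_of_injOn hinj]
    _ = ((Ek w k).card : ℤ) := by rw [himg, Eset_eq_Ek, Set.ncard_coe_finset]
    _ = Nval w k := card_Ek w k


end S3

section S4
lemma max0_lip (s s' : ℤ) : |max 0 s - max 0 s'| ≤ |s - s'| := by
  rw [max_comm 0 s, max_comm 0 s']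
  exact abs_max_sub_max_le_abs s s' 0

lemma Nval_flex (k : ℕ) (B : Finset (V w → ℤ)) (hB : ∀ d, Rq w d < (k : ℤ) → d ∈ B) :
    Nval w k = ∑ d ∈ B, max 0 ((k : ℤ) - Rq w d) := by
  have h1 : Nval w k = ∑ d ∈ Dk w k, max 0 ((k : ℤ) - Rq w d) := by
    apply Finset.sum_congr rfl
    intro d hd
    rw [Dk, Finset.mem_filter] at hd
    rw [max_eq_right (by omega)]
  rw [h1]
  apply Finset.sum_subset
  · intro d hd
    rw [Dk, Finset.mem_filter] at hd
    exact hB d hd.2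
  · intro d hd hnd
    rcases lt_or_ge (Rq w d) (k : ℤ) with h | h
    · exfalso
      apply hnd
      rw [Dk, Finset.mem_filter]
      refine ⟨Fintype.mem_piFinset.2 fun v => ?_, h⟩
      have := abs_le_Rq w d v
      rw [Finset.mem_Icc, ← abs_le]
      omega
    · rw [max_eq_left (by omega)]

lemma div_decomp_unique {j a b c e : ℤ} (hj : 0 < j) (h : j * a + b = j * c + e)
    (hb0 : 0 ≤ b) (hbj : b < j) (he0 : 0 ≤ e) (hej : e < j) : a = c ∧ b = e := by
  have h1 : j * (a - c) = e - b := by ring_nf; linarith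
  rcases lt_trichotomy a c with hlt | heq | hgt
  · exfalso
    have : j * (a - c) ≤ j * (-1) := mul_le_mul_of_nonneg_left (by omega) hj.le
    omega
  · constructor
    · exact heq
    · rw [heq] at h1; omega
  · exfalso
    have : j * 1 ≤ j * (a - c) := mul_le_mul_of_nonneg_left (by omega) hj.le
    omega

variable (hw : PairMatched w)
include hw

lemma key_estimate (k j : ℕ) (hk : 1 ≤ k) (hj : 1 ≤ j) :
    |Nval w (k * j) - (j : ℤ) ^ (t + 1) * Nval w k|
      ≤ (4 * t * (8 * t + 3) ^ t : ℤ) * j ^ (t + 1) * k ^ t := by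
  classical
  have hjz : (0 : ℤ) < (j : ℤ) := by exact_mod_cast hj
  have hkz : (1 : ℤ) ≤ (k : ℤ) := by exact_mod_cast hk
  set a : ℤ := (k : ℤ) + 4 * t with ha
  have ha1 : 1 ≤ a := by omega
  set B1 : Finset (V w → ℤ) := Fintype.piFinset fun _ : V w => Finset.Icc (-a) a with hB1
  set Rj : Finset (V w → ℤ) := Fintype.piFinset fun _ : V w => Finset.Ico (0 : ℤ) (j : ℤ)
    with hRj
  set B2 : Finset (V w → ℤ) :=
    Fintype.piFinset fun _ : V w => Finset.Icc (-((j : ℤ) * a + j)) ((j : ℤ) * a + j) with hB2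
  set m : (V w → ℤ) × (V w → ℤ) → (V w → ℤ) := fun p => fun v => (j : ℤ) * p.1 v + p.2 v
    with hm
  have hN1 : Nval w (k * j) = ∑ d ∈ B2, max 0 (((k * j : ℕ) : ℤ) - Rq w d) := by
    apply Nval_flex
    intro d hd
    refine Fintype.mem_piFinset.2 fun v => ?_
    have h1 := abs_le_Rq w d v
    have h2 : ((k * j : ℕ) : ℤ) ≤ (j : ℤ) * a + j := by push_cast; nlinarith
    rw [Finset.mem_Icc, ← abs_le]
    omega
  have hN3 : Nval w k = ∑ d ∈ B1, max 0 ((k : ℤ) - Rq w d) := by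
    apply Nval_flex
    intro d hd
    refine Fintype.mem_piFinset.2 fun v => ?_
    have h1 := abs_le_Rq w d v
    rw [Finset.mem_Icc, ← abs_le]
    omega
  have hcover : ∀ d' ∈ B2, d' ∉ (B1 ×ˢ Rj).image m →
      max 0 (((k * j : ℕ) : ℤ) - Rq w d') = 0 := by
    intro d' _ hnot
    rcases le_or_gt ((k * j : ℕ) : ℤ) (Rq w d') with h | h
    · exact max_eq_left (by omega)
    · exfalso
      apply hnot
      set d : V w → ℤ := fun v => d' v / (j : ℤ) with hd
      set r : V w → ℤ := fun v => d' v % (j : ℤ) with hr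
      have hdr : m (d, r) = d' := funext fun v => Int.mul_ediv_add_emod (d' v) (j : ℤ)
      have hrmem : r ∈ Rj := Fintype.mem_piFinset.2 fun v => Finset.mem_Ico.2
        ⟨Int.emod_nonneg _ (by omega), Int.emod_lt_of_pos _ hjz⟩
      have hrb : Rq w r ≤ 4 * t * j := Rq_le_of_bound w r hjz.le (fun v => by
        have h1 := Int.emod_nonneg (d' v) (show (j : ℤ) ≠ 0 by omega)
        have h2 := Int.emod_lt_of_pos (d' v) hjz
        rw [abs_le]
        constructor <;> [skip; skip] <;> simp only [hr] <;> omega)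
      have hjRd : (j : ℤ) * Rq w d ≤ Rq w d' + Rq w r := by
        have h1 : (fun v => (j : ℤ) * d v) = d' + (fun v => - r v) := funext fun v => by
          have h2 := Int.mul_ediv_add_emod (d' v) (j : ℤ)
          show (j : ℤ) * d v = d' v + - r v
          simp only [hd, hr]
          omega
        calc (j : ℤ) * Rq w d = Rq w (fun v => (j : ℤ) * d v) := (Rq_smul w _ hjz.le d).symm
          _ = Rq w (d' + fun v => - r v) := by rw [h1]
          _ ≤ Rq w d' + Rq w (fun v => - r v) := Rq_add_le w _ _
          _ = Rq w d' + Rq w r := by rw [Rq_neg]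
      have hdmem : d ∈ B1 := by
        refine Fintype.mem_piFinset.2 fun v => ?_
        have h1 := abs_le_Rq w d v
        have h2 : (j : ℤ) * Rq w d < (j : ℤ) * a := by
          calc (j : ℤ) * Rq w d ≤ Rq w d' + Rq w r := hjRd
            _ < ((k * j : ℕ) : ℤ) + 4 * t * j := by omega
            _ = (j : ℤ) * a := by push_cast [ha]; ring
        have h3 : Rq w d < a := lt_of_mul_lt_mul_left h2 (by omega)
        rw [Finset.mem_Icc, ← abs_le]
        omega
      exact Finset.mem_image.2 ⟨(d, r), Finset.mem_product.2 ⟨hdmem, hrmem⟩, hdr⟩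
  have hinj : ∀ p ∈ B1 ×ˢ Rj, ∀ q ∈ B1 ×ˢ Rj, m p = m q → p = q := by
    intro p hp q hq heq
    rw [Finset.mem_product] at hp hq
    have h1 : ∀ v, p.1 v = q.1 v ∧ p.2 v = q.2 v := by
      intro v
      have he : (j : ℤ) * p.1 v + p.2 v = (j : ℤ) * q.1 v + q.2 v := congrFun heq v
      have hp2 := Fintype.mem_piFinset.1 hp.2 v
      rw [Finset.mem_Ico] at hp2
      have hq2 := Fintype.mem_piFinset.1 hq.2 v
      rw [Finset.mem_Ico] at hq2
      exact div_decomp_unique hjz he hp2.1 hp2.2 hq2.1 hq2.2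
    exact Prod.ext (funext fun v => (h1 v).1) (funext fun v => (h1 v).2)
  have himgsub : (B1 ×ˢ Rj).image m ⊆ B2 := by
    intro d' hd'
    obtain ⟨p, hp, rfl⟩ := Finset.mem_image.1 hd'
    rw [Finset.mem_product] at hp
    refine Fintype.mem_piFinset.2 fun v => ?_
    have h1 := Fintype.mem_piFinset.1 hp.1 v
    rw [Finset.mem_Icc] at h1
    have h2 := Fintype.mem_piFinset.1 hp.2 v
    rw [Finset.mem_Ico] at h2
    rw [Finset.mem_Icc]
    have hmv : m p v = (j : ℤ) * p.1 v + p.2 v := rfl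
    rw [hmv]
    constructor <;> nlinarith [h1.1, h1.2, h2.1, h2.2, hjz]
  have hsum2 : ∑ d' ∈ B2, max 0 (((k * j : ℕ) : ℤ) - Rq w d')
      = ∑ p ∈ B1 ×ˢ Rj, max 0 (((k * j : ℕ) : ℤ) - Rq w (m p)) := by
    calc ∑ d' ∈ B2, max 0 (((k * j : ℕ) : ℤ) - Rq w d')
        = ∑ d' ∈ (B1 ×ˢ Rj).image m, max 0 (((k * j : ℕ) : ℤ) - Rq w d') :=
          (Finset.sum_subset himgsub hcover).symm
      _ = ∑ p ∈ B1 ×ˢ Rj, max 0 (((k * j : ℕ) : ℤ) - Rq w (m p)) := Finset.sum_image hinj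
  have hper : ∀ p ∈ B1 ×ˢ Rj,
      |max 0 (((k * j : ℕ) : ℤ) - Rq w (m p)) - (j : ℤ) * max 0 ((k : ℤ) - Rq w p.1)|
        ≤ 4 * t * j := by
    intro p hp
    rw [Finset.mem_product] at hp
    have hr : Rq w p.2 ≤ 4 * t * j := Rq_le_of_bound w p.2 hjz.le (fun v => by
      have h2 := Fintype.mem_piFinset.1 hp.2 v
      rw [Finset.mem_Ico] at h2
      rw [abs_le]
      omega)
    have hsmul : (j : ℤ) * max 0 ((k : ℤ) - Rq w p.1)
        = max 0 (((k * j : ℕ) : ℤ) - Rq w (fun v => (j : ℤ) * p.1 v)) := by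
      rw [Rq_smul w _ hjz.le, mul_max_of_nonneg _ _ hjz.le, mul_zero]
      congr 1
      push_cast
      ring
    rw [hsmul]
    have habs : |Rq w (m p) - Rq w (fun v => (j : ℤ) * p.1 v)| ≤ Rq w p.2 := by
      have h0 := Rq_sub_abs w (fun v => (j : ℤ) * p.1 v) p.2
      have hrw : ((fun v => (j : ℤ) * p.1 v) + p.2) = m p := rfl
      rw [hrw] at h0
      exact h0
    calc |max 0 (((k * j : ℕ) : ℤ) - Rq w (m p))
          - max 0 (((k * j : ℕ) : ℤ) - Rq w (fun v => (j : ℤ) * p.1 v))|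
        ≤ |(((k * j : ℕ) : ℤ) - Rq w (m p))
          - (((k * j : ℕ) : ℤ) - Rq w (fun v => (j : ℤ) * p.1 v))| := max0_lip _ _
      _ = |Rq w (m p) - Rq w (fun v => (j : ℤ) * p.1 v)| := by
          rw [← abs_neg]
          congr 1
          ring
      _ ≤ Rq w p.2 := habs
      _ ≤ 4 * t * j := hr
  have hcardRj : Rj.card = j ^ t := by
    rw [hRj, Fintype.card_piFinset]
    simp only [Int.card_Ico, sub_zero, Int.toNat_natCast]
    rw [Finset.prod_const, Finset.card_univ, card_V w hw]
  have hcardB1 : B1.card = (2 * a + 1).toNat ^ t := by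
    rw [hB1, Fintype.card_piFinset]
    have : (Finset.Icc (-a) a).card = (2 * a + 1).toNat := by
      rw [Int.card_Icc]
      congr 1
      ring
    rw [this]
    rw [Finset.prod_const, Finset.card_univ, card_V w hw]
  have hsplit : ∑ p ∈ B1 ×ˢ Rj, (j : ℤ) * max 0 ((k : ℤ) - Rq w p.1)
      = (j : ℤ) ^ (t + 1) * Nval w k := by
    rw [Finset.sum_product, hN3, Finset.mul_sum]
    apply Finset.sum_congr rfl
    intro x _
    rw [show (∑ y ∈ Rj, (j : ℤ) * max 0 ((k : ℤ) - Rq w (x, y).1))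
      = ∑ _y ∈ Rj, (j : ℤ) * max 0 ((k : ℤ) - Rq w x) from rfl]
    rw [Finset.sum_const, nsmul_eq_mul, hcardRj]
    push_cast
    ring
  have hdiff : Nval w (k * j) - (j : ℤ) ^ (t + 1) * Nval w k
      = ∑ p ∈ B1 ×ˢ Rj, (max 0 (((k * j : ℕ) : ℤ) - Rq w (m p))
        - (j : ℤ) * max 0 ((k : ℤ) - Rq w p.1)) := by
    rw [Finset.sum_sub_distrib, ← hsum2, ← hN1, ← hsplit]
  rw [hdiff]
  calc |∑ p ∈ B1 ×ˢ Rj, (max 0 (((k * j : ℕ) : ℤ) - Rq w (m p))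
        - (j : ℤ) * max 0 ((k : ℤ) - Rq w p.1))|
      ≤ ∑ p ∈ B1 ×ˢ Rj, |max 0 (((k * j : ℕ) : ℤ) - Rq w (m p))
        - (j : ℤ) * max 0 ((k : ℤ) - Rq w p.1)| := Finset.abs_sum_le_sum_abs _ _
    _ ≤ ∑ _p ∈ B1 ×ˢ Rj, (4 * (t : ℤ) * j) := Finset.sum_le_sum hper
    _ = ((B1 ×ˢ Rj).card : ℤ) * (4 * t * j) := by rw [Finset.sum_const, nsmul_eq_mul]
    _ ≤ (4 * t * (8 * t + 3) ^ t : ℤ) * j ^ (t + 1) * k ^ t := by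
        rw [Finset.card_product, hcardRj, hcardB1]
        have h2a : ((2 * a + 1).toNat : ℤ) = 2 * a + 1 := Int.toNat_of_nonneg (by omega)
        have hb : (2 * a + 1) ≤ (8 * t + 3) * k := by
          rw [ha]
          nlinarith
        have hpow : ((2 * a + 1).toNat : ℤ) ^ t ≤ ((8 * t + 3) * k) ^ t := by
          rw [h2a]
          exact pow_le_pow_left₀ (by omega) hb t
        push_cast
        calc ((2 * a + 1).toNat : ℤ) ^ t * (j : ℤ) ^ t * (4 * t * j)
            ≤ ((8 * t + 3) * k) ^ t * (j : ℤ) ^ t * (4 * t * j) := by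
              apply mul_le_mul_of_nonneg_right _ (by positivity)
              apply mul_le_mul_of_nonneg_right hpow (by positivity)
          _ = 4 * t * (8 * t + 3) ^ t * j ^ (t + 1) * k ^ t := by
              rw [mul_pow]
              ring


end S4

section S5
/-- the generating position of the letter at position i -/
noncomputable def genOf (i : Fin (2 * t)) : Fin (2 * t) :=
  if i < partner w i then i else partner w i

lemma sum_upi_zero {k : ℕ} (π : Fin (2 * t + 1) → Fin k)
    (h : π 0 = π (Fin.last (2 * t))) : ∑ i, upi π i = 0 := by
  have h0 := tele π (Fin.last (2 * t))
  have hfull : Finset.univ.filter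
      (fun i : Fin (2 * t) => (i : ℕ) < ((Fin.last (2 * t) : Fin (2 * t + 1)) : ℕ))
      = Finset.univ := by
    apply Finset.filter_true_of_mem
    intro i _
    rw [Fin.val_last]
    exact i.2
  rw [hfull, h, sub_self] at h0
  exact h0.symm

variable (hw : PairMatched w)
include hw

lemma w_genOf (i : Fin (2 * t)) : w (genOf w i) = w i := by
  rw [genOf]
  split
  · rfl
  · exact w_partner w hw i

lemma genOf_gen (i : Fin (2 * t)) : genOf w i < partner w (genOf w i) := by
  rw [genOf]
  split
  · assumption
  · rename_i h
    rw [partner_partner w hw]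
    have := partner_ne w hw i
    omega

lemma cover {k : ℕ} (π : Fin (2 * t + 1) → Fin k)
    (hd : π ∈ toepStar t k w \ toepStarSigned t k w (fun _ => -1)) :
    ∃ g : V w, upi π (partner w g.1) = upi π g.1 ∧ upi π g.1 ≠ 0 := by
  obtain ⟨hstar, hnot⟩ := hd
  have : ¬ (∀ i j : Fin (2 * t), IsGen w i → i ≠ j → w j = w i →
      (π i.castSucc : ℤ) - (π i.succ : ℤ)
        = (fun _ : Fin (2 * t) => (-1 : ℤ)) i * ((π j.castSucc : ℤ) - (π j.succ : ℤ))) := by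
    intro hsign
    exact hnot ⟨hstar, hsign⟩
  push_neg at this
  obtain ⟨i, j, hgen, hne, hji, hval⟩ := this
  have hg : i < partner w i := (isGen_iff w hw i).1 hgen
  have hj : j = partner w i := eq_partner w hw hne.symm hji
  subst hj
  have habs := hstar.2 i (partner w i) (w_partner w hw i).symm
  have habs' : (upi π i).natAbs = (upi π (partner w i)).natAbs := habs
  refine ⟨⟨i, hg⟩, ?_, ?_⟩
  · -- upi π (partner i) = upi π i
    rcases Int.natAbs_eq_natAbs_iff.1 habs' with h | h
    · exact h.symm
    · exfalso
      apply hval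
      show upi π i = -1 * upi π (partner w i)
      rw [h]
      push_cast
      ring
  · intro h0
    apply hval
    show upi π i = -1 * upi π (partner w i)
    have h0' : upi π i = 0 := h0
    have hpz : upi π (partner w i) = 0 := by
      rw [← Int.natAbs_eq_zero, ← habs', h0']
      simp
    rw [h0', hpz]
    ring


noncomputable def gwit {k : ℕ} (π : Fin (2 * t + 1) → Fin k) (hne : Nonempty (V w)) : V w :=
  if h : ∃ g : V w, upi π (partner w g.1) = upi π g.1 ∧ upi π g.1 ≠ 0 then h.choose
  else hne.some

omit hw
lemma gwit_spec {k : ℕ} (π : Fin (2 * t + 1) → Fin k) (hne : Nonempty (V w))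
    (h : ∃ g : V w, upi π (partner w g.1) = upi π g.1 ∧ upi π g.1 ≠ 0) :
    upi π (partner w (gwit w π hne).1) = upi π (gwit w π hne).1
      ∧ upi π (gwit w π hne).1 ≠ 0 := by
  rw [gwit, dif_pos h]
  exact h.choose_spec

noncomputable def Psi {k : ℕ} (hne : Nonempty (V w)) (π : Fin (2 * t + 1) → Fin k) :
    V w × ℤ × (V w → ℤ) × (Fin (2 * t) → Bool) :=
  (gwit w π hne, ((π 0 : ℤ), fun v => if v = gwit w π hne then 0 else upi π v.1,
    fun i => decide (upi π i = upi π (genOf w i))))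

noncomputable def Tgt (k : ℕ) : Finset (V w × ℤ × (V w → ℤ) × (Fin (2 * t) → Bool)) :=
  Finset.univ.biUnion fun g : V w => {g} ×ˢ Finset.Icc (0 : ℤ) ((k : ℤ) - 1) ×ˢ
    (Fintype.piFinset fun v => if v = g then ({0} : Finset ℤ)
      else Finset.Icc (-(k : ℤ)) (k : ℤ)) ×ˢ
    (Fintype.piFinset fun _ : Fin (2 * t) => (Finset.univ : Finset Bool))

include hw
lemma Tgt_card_le (k : ℕ) :
    (Tgt w k).card ≤ t * (k * ((2 * k + 1) ^ (t - 1) * 2 ^ (2 * t))) := by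
  classical
  refine Finset.card_biUnion_le.trans ?_
  have hone : ∀ g : V w, ({g} ×ˢ Finset.Icc (0 : ℤ) ((k : ℤ) - 1) ×ˢ
      (Fintype.piFinset fun v => if v = g then ({0} : Finset ℤ)
        else Finset.Icc (-(k : ℤ)) (k : ℤ)) ×ˢ
      (Fintype.piFinset fun _ : Fin (2 * t) => (Finset.univ : Finset Bool))).card
      ≤ k * ((2 * k + 1) ^ (t - 1) * 2 ^ (2 * t)) := by
    intro g
    rw [Finset.card_product, Finset.card_product, Finset.card_product, Finset.card_singleton,
      one_mul]
    have hIcc : (Finset.Icc (0 : ℤ) ((k : ℤ) - 1)).card = k := by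
      rw [Int.card_Icc]
      simp
    have hpif : (Fintype.piFinset fun v => if v = g then ({0} : Finset ℤ)
        else Finset.Icc (-(k : ℤ)) (k : ℤ)).card ≤ (2 * k + 1) ^ (t - 1) := by
      rw [Fintype.card_piFinset]
      rw [Finset.prod_eq_prod_diff_singleton_mul (Finset.mem_univ g)
        (fun v => (if v = g then ({0} : Finset ℤ) else Finset.Icc (-(k : ℤ)) (k : ℤ)).card)]
      rw [if_pos rfl, Finset.card_singleton, mul_one]
      have : ∀ v ∈ Finset.univ \ {g},
          (if v = g then ({0} : Finset ℤ) else Finset.Icc (-(k : ℤ)) (k : ℤ)).card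
            = 2 * k + 1 := by
        intro v hv
        rw [Finset.mem_sdiff, Finset.mem_singleton] at hv
        rw [if_neg hv.2, Int.card_Icc]
        omega
      rw [Finset.prod_congr rfl this, Finset.prod_const]
      apply Nat.pow_le_pow_right (by omega)
      rw [Finset.card_sdiff_of_subset (by simp), Finset.card_singleton, Finset.card_univ, card_V w hw]
    have hbool : (Fintype.piFinset fun _ : Fin (2 * t) => (Finset.univ : Finset Bool)).card
        = 2 ^ (2 * t) := by
      rw [Fintype.card_piFinset, Finset.prod_const, Finset.card_univ, Finset.card_univ,
        Fintype.card_fin]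
      norm_num
    rw [hIcc, hbool]
    exact Nat.mul_le_mul_left _ (Nat.mul_le_mul_right _ hpif)
  calc ∑ g : V w, _ ≤ ∑ _g : V w, k * ((2 * k + 1) ^ (t - 1) * 2 ^ (2 * t)) :=
        Finset.sum_le_sum fun g _ => hone g
    _ = t * (k * ((2 * k + 1) ^ (t - 1) * 2 ^ (2 * t))) := by
        rw [Finset.sum_const, smul_eq_mul, Finset.card_univ, card_V w hw]

lemma diff_ncard_le (k : ℕ) (ht : 0 < t) :
    (toepStar t k w \ toepStarSigned t k w (fun _ => -1)).ncard
      ≤ t * (k * ((2 * k + 1) ^ (t - 1) * 2 ^ (2 * t))) := by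
  classical
  have hne : Nonempty (V w) := by
    rw [← Fintype.card_pos_iff, card_V w hw]
    exact ht
  set S := toepStar t k w \ toepStarSigned t k w (fun _ => -1) with hS
  have hmaps : ∀ π ∈ S, Psi w hne π ∈ (Tgt w k : Finset _) := by
    intro π hπ
    simp only [Psi]
    rw [Tgt, Finset.mem_biUnion]
    refine ⟨gwit w π hne, Finset.mem_univ _, ?_⟩
    rw [Finset.mem_product, Finset.mem_product, Finset.mem_product]
    refine ⟨Finset.mem_singleton.2 rfl, ?_, ?_, ?_⟩
    · show ((π 0 : ℕ) : ℤ) ∈ Finset.Icc (0 : ℤ) ((k : ℤ) - 1)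
      rw [Finset.mem_Icc]
      have h1 := (π 0).2
      constructor
      · positivity
      · omega
    · refine Fintype.mem_piFinset.2 fun v => ?_
      show (if v = gwit w π hne then (0 : ℤ) else upi π v.1)
        ∈ (if v = gwit w π hne then ({0} : Finset ℤ) else Finset.Icc (-(k : ℤ)) (k : ℤ))
      by_cases hv : v = gwit w π hne
      · rw [if_pos hv, if_pos hv]
        simp
      · rw [if_neg hv, if_neg hv, Finset.mem_Icc]
        have h1 := (π v.1.castSucc).2
        have h2 := (π v.1.succ).2
        rw [upi]
        omega
    · refine Fintype.mem_piFinset.2 fun i => Finset.mem_univ _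
  have hinj : Set.InjOn (Psi w hne) S := by
    intro π hπ ρ hρ heq
    simp only [Psi, Prod.mk.injEq] at heq
    obtain ⟨hg0, h0, hd, hb⟩ := heq
    have hspecπ := gwit_spec w π hne (cover w hw π hπ)
    have hspecρ' := gwit_spec w ρ hne (cover w hw ρ hρ)
    set g : V w := gwit w π hne with hgdef
    have hg : g = gwit w ρ hne := hg0
    rw [← hg] at hspecρ' hd
    have hspecρ : upi ρ (partner w g.1) = upi ρ g.1 ∧ upi ρ g.1 ≠ 0 := hspecρ'
    have hdv : ∀ v : V w, v ≠ g → upi π v.1 = upi ρ v.1 := by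
      intro v hv
      have h4 := congrFun hd v
      rw [if_neg hv, if_neg hv] at h4
      exact h4
    have hbv : ∀ i, (upi π i = upi π (genOf w i)) ↔ (upi ρ i = upi ρ (genOf w i)) := by
      intro i
      have h4 := congrFun hb i
      exact decide_eq_decide.1 h4
    have habsπ : ∀ i, (upi π i).natAbs = (upi π (genOf w i)).natAbs := by
      intro i
      exact hπ.1.2 i (genOf w i) (w_genOf w hw i).symm
    have habsρ : ∀ i, (upi ρ i).natAbs = (upi ρ (genOf w i)).natAbs := by
      intro i
      exact hρ.1.2 i (genOf w i) (w_genOf w hw i).symm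
    have claimA : ∀ i, genOf w i ≠ g.1 → upi π i = upi ρ i := by
      intro i hig
      have hvg : (⟨genOf w i, genOf_gen w hw i⟩ : V w) ≠ g := by
        intro hc
        exact hig (congrArg Subtype.val hc)
      have hc : upi π (genOf w i) = upi ρ (genOf w i) := hdv _ hvg
      rcases eq_or_ne (upi π (genOf w i)) 0 with hz | hz
      · have h1 : upi π i = 0 := by
          rw [← Int.natAbs_eq_zero, habsπ i, Int.natAbs_eq_zero]
          exact hz
        have h2 : upi ρ i = 0 := by
          rw [← Int.natAbs_eq_zero, habsρ i, Int.natAbs_eq_zero, ← hc]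
          exact hz
        rw [h1, h2]
      · by_cases hb1 : upi π i = upi π (genOf w i)
        · have hb2 : upi ρ i = upi ρ (genOf w i) := (hbv i).1 hb1
          rw [hb1, hb2, hc]
        · have hb2 : ¬ upi ρ i = upi ρ (genOf w i) := fun hr => hb1 ((hbv i).2 hr)
          have h1 : upi π i = - upi π (genOf w i) := by
            rcases Int.natAbs_eq_natAbs_iff.1 (habsπ i) with h | h
            · exact absurd h hb1
            · exact h
          have h2 : upi ρ i = - upi ρ (genOf w i) := by
            rcases Int.natAbs_eq_natAbs_iff.1 (habsρ i) with h | h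
            · exact absurd h hb2
            · exact h
          rw [h1, h2, hc]
    have hgenOf_ne : ∀ i : Fin (2 * t), i ≠ g.1 → i ≠ partner w g.1 → genOf w i ≠ g.1 := by
      intro i h1 h2 hc
      rw [genOf] at hc
      by_cases hgen : i < partner w i
      · rw [if_pos hgen] at hc
        exact h1 hc
      · rw [if_neg hgen] at hc
        apply h2
        rw [← hc, partner_partner w hw]
    have hpair_ne : g.1 ≠ partner w g.1 := (partner_ne w hw g.1).symm
    have hsplit : ∀ (σ : Fin (2 * t + 1) → Fin k), σ ∈ toepStar t k w →
        upi σ g.1 + upi σ (partner w g.1)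
          + ∑ i ∈ Finset.univ \ {g.1, partner w g.1}, upi σ i = 0 := by
      intro σ hσ
      have hz := sum_upi_zero σ hσ.1
      have hsub : ({g.1, partner w g.1} : Finset (Fin (2 * t))) ⊆ Finset.univ :=
        Finset.subset_univ _
      rw [← Finset.sum_sdiff hsub, Finset.sum_pair hpair_ne] at hz
      linarith [hz]
    have claimB : upi π g.1 = upi ρ g.1 := by
      have h1 := hsplit π hπ.1
      have h2 := hsplit ρ hρ.1
      have h3 : ∑ i ∈ Finset.univ \ {g.1, partner w g.1}, upi π i
          = ∑ i ∈ Finset.univ \ {g.1, partner w g.1}, upi ρ i := by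
        apply Finset.sum_congr rfl
        intro i hi
        rw [Finset.mem_sdiff, Finset.mem_insert, Finset.mem_singleton] at hi
        push_neg at hi
        exact claimA i (hgenOf_ne i hi.2.1 hi.2.2)
      rw [hspecπ.1] at h1
      rw [hspecρ.1] at h2
      linarith [h1, h2, h3]
    have allEq : ∀ i, upi π i = upi ρ i := by
      intro i
      by_cases hig : genOf w i ≠ g.1
      · exact claimA i hig
      · push_neg at hig
        have hcase : i = g.1 ∨ i = partner w g.1 := by
          rw [genOf] at hig
          by_cases hgen : i < partner w i
          · left
            rw [if_pos hgen] at hig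
            exact hig
          · right
            rw [if_neg hgen] at hig
            rw [← hig, partner_partner w hw]
        rcases hcase with rfl | rfl
        · exact claimB
        · rw [hspecπ.1, hspecρ.1]
          exact claimB
    funext m
    have t1 := tele π m
    have t2 := tele ρ m
    rw [Finset.sum_congr rfl (fun i _ => allEq i), ← t2] at t1
    have hval : (π m : ℤ) = (ρ m : ℤ) := by omega
    exact Fin.ext (by exact_mod_cast hval)
  calc S.ncard = (Psi w hne '' S).ncard := (Set.ncard_image_of_injOn hinj).symm
    _ ≤ (Tgt w k : Finset _).card := by
        rw [← Set.ncard_coe_finset]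
        exact Set.ncard_le_ncard (Set.image_subset_iff.2 hmaps) (Finset.finite_toSet _)
    _ ≤ _ := Tgt_card_le w hw k


end S5

section S6
lemma signed_subset (k : ℕ) :
    toepStarSigned t k w (fun _ => -1) ⊆ toepStar t k w := fun _ h => h.1

variable (hw : PairMatched w)
include hw

lemma diff_ncard_le' (k : ℕ) :
    (toepStar t k w \ toepStarSigned t k w (fun _ => -1)).ncard
      ≤ t * 3 ^ t * 2 ^ (2 * t) * k ^ t := by
  rcases Nat.eq_zero_or_pos t with rfl | ht
  · have hempty : toepStar 0 k w \ toepStarSigned 0 k w (fun _ => -1) = ∅ := by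
      ext π
      simp only [Set.mem_diff, Set.mem_empty_iff_false, iff_false, not_and, not_not]
      intro hstar
      exact ⟨hstar, fun i _ _ _ _ => absurd i.2 (by omega)⟩
    rw [hempty]
    simp
  · rcases Nat.eq_zero_or_pos k with rfl | hk
    · have hempty : toepStar t 0 w \ toepStarSigned t 0 w (fun _ => -1) = ∅ := by
        ext π
        simp only [Set.mem_diff, Set.mem_empty_iff_false, iff_false, not_and, not_not]
        intro hstar
        exact absurd (π 0).2 (by omega)
      rw [hempty]
      simp
    · calc (toepStar t k w \ toepStarSigned t k w (fun _ => -1)).ncard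
          ≤ t * (k * ((2 * k + 1) ^ (t - 1) * 2 ^ (2 * t))) := diff_ncard_le w hw k ht
        _ ≤ t * (k * ((3 * k) ^ (t - 1) * 2 ^ (2 * t))) := by
            apply Nat.mul_le_mul_left
            apply Nat.mul_le_mul_left
            apply Nat.mul_le_mul_right
            exact Nat.pow_le_pow_left (by omega) _
        _ = t * 3 ^ (t - 1) * 2 ^ (2 * t) * k ^ t := by
            rw [mul_pow]
            have hkpow : k * k ^ (t - 1) = k ^ t := by
              rw [← pow_succ']
              congr 1
              omega
            ring_nf
            rw [← hkpow]
            ring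
        _ ≤ t * 3 ^ t * 2 ^ (2 * t) * k ^ t := by
            apply Nat.mul_le_mul_right
            apply Nat.mul_le_mul_right
            apply Nat.mul_le_mul_left
            exact Nat.pow_le_pow_right (by omega) (by omega)

lemma main_limit :
    ∃ p : ℝ,
      Tendsto (fun k : ℕ => ((toepStar t k w).ncard : ℝ) / (k : ℝ) ^ (t + 1))
        atTop (nhds p) ∧
      Tendsto (fun k : ℕ =>
          ((toepStarSigned t k w (fun _ => -1)).ncard : ℝ) / (k : ℝ) ^ (t + 1))
        atTop (nhds p) := by
  classical
  set C : ℝ := ((4 * t * (8 * t + 3) ^ t : ℕ) : ℝ) with hC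
  have hC0 : 0 ≤ C := by positivity
  set aseq : ℕ → ℝ := fun k => ((Nval w k : ℤ) : ℝ) / (k : ℝ) ^ (t + 1) with haseq
  have hkey : ∀ k j : ℕ, 1 ≤ k → 1 ≤ j → |aseq (k * j) - aseq k| ≤ C / k := by
    intro k j hk hj
    have hkR : (0 : ℝ) < (k : ℝ) := by exact_mod_cast hk
    have hjR : (0 : ℝ) < (j : ℝ) := by exact_mod_cast hj
    have h1 := key_estimate w hw k j hk hj
    have h2 : |((Nval w (k * j) : ℤ) : ℝ) - (j : ℝ) ^ (t + 1) * ((Nval w k : ℤ) : ℝ)|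
        ≤ C * (j : ℝ) ^ (t + 1) * (k : ℝ) ^ t := by
      rw [hC]
      exact_mod_cast h1
    have heq : aseq (k * j) - aseq k
        = (((Nval w (k * j) : ℤ) : ℝ) - (j : ℝ) ^ (t + 1) * ((Nval w k : ℤ) : ℝ))
          / ((k : ℝ) ^ (t + 1) * (j : ℝ) ^ (t + 1)) := by
      have hkj : ((k * j : ℕ) : ℝ) ^ (t + 1) = (k : ℝ) ^ (t + 1) * (j : ℝ) ^ (t + 1) := by
        push_cast
        ring
      show ((Nval w (k * j) : ℤ) : ℝ) / ((k * j : ℕ) : ℝ) ^ (t + 1)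
        - ((Nval w k : ℤ) : ℝ) / (k : ℝ) ^ (t + 1) = _
      rw [hkj]
      field_simp
    rw [heq, abs_div,
      abs_of_pos (show (0 : ℝ) < (k : ℝ) ^ (t + 1) * (j : ℝ) ^ (t + 1) by positivity),
      div_le_iff₀ (by positivity)]
    calc |((Nval w (k * j) : ℤ) : ℝ) - (j : ℝ) ^ (t + 1) * ((Nval w k : ℤ) : ℝ)|
        ≤ C * (j : ℝ) ^ (t + 1) * (k : ℝ) ^ t := h2
      _ = C / k * ((k : ℝ) ^ (t + 1) * (j : ℝ) ^ (t + 1)) := by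
          field_simp
          ring
  have hcauchy : CauchySeq (fun n : ℕ => aseq (n + 1)) := by
    apply cauchySeq_of_le_tendsto_0 (b := fun N : ℕ => 2 * C / ((N + 1 : ℕ) : ℝ))
    · intro n m N hn hm
      rw [Real.dist_eq]
      have h1 : |aseq ((n + 1) * (m + 1)) - aseq (n + 1)| ≤ C / ((n + 1 : ℕ) : ℝ) :=
        hkey (n + 1) (m + 1) (by omega) (by omega)
      have h2 : |aseq ((n + 1) * (m + 1)) - aseq (m + 1)| ≤ C / ((m + 1 : ℕ) : ℝ) := by
        rw [mul_comm]
        exact hkey (m + 1) (n + 1) (by omega) (by omega)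
      have h3 : |aseq (n + 1) - aseq (m + 1)|
          ≤ |aseq ((n + 1) * (m + 1)) - aseq (n + 1)|
            + |aseq ((n + 1) * (m + 1)) - aseq (m + 1)| := by
        rw [abs_sub_comm (aseq ((n + 1) * (m + 1)))]
        exact abs_sub_le _ _ _
      have hposN : (0 : ℝ) < ((N + 1 : ℕ) : ℝ) := by exact_mod_cast Nat.succ_pos N
      have hposn : (0 : ℝ) < ((n + 1 : ℕ) : ℝ) := by exact_mod_cast Nat.succ_pos n
      have hposm : (0 : ℝ) < ((m + 1 : ℕ) : ℝ) := by exact_mod_cast Nat.succ_pos m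
      have h4 : C / ((n + 1 : ℕ) : ℝ) ≤ C / ((N + 1 : ℕ) : ℝ) := by
        rw [div_le_div_iff₀ hposn hposN]
        apply mul_le_mul_of_nonneg_left _ hC0
        exact_mod_cast Nat.succ_le_succ hn
      have h5 : C / ((m + 1 : ℕ) : ℝ) ≤ C / ((N + 1 : ℕ) : ℝ) := by
        rw [div_le_div_iff₀ hposm hposN]
        apply mul_le_mul_of_nonneg_left _ hC0
        exact_mod_cast Nat.succ_le_succ hm
      calc |aseq (n + 1) - aseq (m + 1)| ≤ _ := h3
        _ ≤ C / ((N + 1 : ℕ) : ℝ) + C / ((N + 1 : ℕ) : ℝ) := by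
            apply add_le_add (h1.trans h4) (h2.trans h5)
        _ = 2 * C / ((N + 1 : ℕ) : ℝ) := by ring
    · exact (tendsto_add_atTop_iff_nat 1).2 (tendsto_const_div_atTop_nhds_zero_nat (2 * C))
  obtain ⟨p, hp⟩ := cauchySeq_tendsto_of_complete hcauchy
  have hpa : Tendsto aseq atTop (nhds p) := (tendsto_add_atTop_iff_nat 1).1 hp
  have hsigned : Tendsto (fun k : ℕ =>
      ((toepStarSigned t k w (fun _ => -1)).ncard : ℝ) / (k : ℝ) ^ (t + 1))
      atTop (nhds p) := by
    have : (fun k : ℕ =>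
        ((toepStarSigned t k w (fun _ => -1)).ncard : ℝ) / (k : ℝ) ^ (t + 1)) = aseq := by
      funext k
      rw [haseq]
      congr 1
      exact_mod_cast congrArg (fun z : ℤ => (z : ℝ)) (count_signed w hw k)
    rw [this]
    exact hpa
  refine ⟨p, ?_, hsigned⟩
  -- star = signed + diff
  have hdiff0 : Tendsto (fun k : ℕ =>
      ((toepStar t k w \ toepStarSigned t k w (fun _ => -1)).ncard : ℝ) / (k : ℝ) ^ (t + 1))
      atTop (nhds 0) := by
    set A : ℝ := ((t * 3 ^ t * 2 ^ (2 * t) : ℕ) : ℝ) with hA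
    apply squeeze_zero' (g := fun k : ℕ => A / (k : ℝ))
    · filter_upwards [eventually_ge_atTop 1] with k hk
      positivity
    · filter_upwards [eventually_ge_atTop 1] with k hk
      have hkR : (0 : ℝ) < (k : ℝ) := by exact_mod_cast hk
      have hle := diff_ncard_le' w hw k
      have hleR : ((toepStar t k w \ toepStarSigned t k w (fun _ => -1)).ncard : ℝ)
          ≤ A * (k : ℝ) ^ t := by
        rw [hA]
        exact_mod_cast hle
      rw [div_le_div_iff₀ (by positivity) hkR]
      calc ((toepStar t k w \ toepStarSigned t k w (fun _ => -1)).ncard : ℝ) * (k : ℝ)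
          ≤ A * (k : ℝ) ^ t * (k : ℝ) := by
            apply mul_le_mul_of_nonneg_right hleR hkR.le
        _ = A * (k : ℝ) ^ (t + 1) := by ring
    · exact tendsto_const_div_atTop_nhds_zero_nat A
  have hfun : ∀ k : ℕ, ((toepStar t k w).ncard : ℝ) / (k : ℝ) ^ (t + 1)
      = ((toepStarSigned t k w (fun _ => -1)).ncard : ℝ) / (k : ℝ) ^ (t + 1)
        + ((toepStar t k w \ toepStarSigned t k w (fun _ => -1)).ncard : ℝ)
          / (k : ℝ) ^ (t + 1) := by
    intro k
    have hsub := signed_subset w k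
    have hcard := Set.ncard_diff_add_ncard_of_subset hsub (Set.toFinite _)
    rw [← add_div]
    congr 1
    rw [← hcard]
    push_cast
    ring
  have := hsigned.add hdiff0
  rw [add_zero] at this
  apply this.congr
  intro k
  exact (hfun k).symm


end S6

end ToepAux

/-- For any pair-matched word `w` of length `2t`, the limits of
`#Π*_{L_T,k,l₀}(w)/k^{t+1}` and `#Π*_{L_T,k}(w)/k^{t+1}` as `k → ∞` both exist
and are equal (to `p_T(w)`), where `l₀ = (−1,…,−1)`. -/
theorem toepStarSigned_l0_limit (t : ℕ) (w : Fin (2 * t) → ℕ) (hw : PairMatched w) :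
    ∃ p : ℝ,
      Tendsto (fun k : ℕ => ((toepStar t k w).ncard : ℝ) / (k : ℝ) ^ (t + 1))
        atTop (nhds p) ∧
      Tendsto (fun k : ℕ =>
          ((toepStarSigned t k w (fun _ => -1)).ncard : ℝ) / (k : ℝ) ^ (t + 1))
        atTop (nhds p) :=
  ToepAux.main_limit w hw
end

section
/- For the block Toeplitz matrix with Toeplitz blocks and any pair-matched word w of length 2t, for all n and k one has (#Π*_{L_T,n,l_0}(w))·(#Π*_{L_T,k,l_0}(w)) ≤ #Π*_{L,nk}(w) ≤ (#Π*_{L_T,n}(w))·(#Π*_{L_T,k}(w)), where L is the link function of the nk × nk block matrix. -/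
open Filter Topology

/-- For a circuit `π` on `{1,…,nk}` (coded by `Fin (n*k)`) and a step `i`, the
block-level Toeplitz increment: difference of block addresses `⌈·/n⌉`. -/
def blockDiff {t n k : ℕ} (π : Fin (2 * t + 1) → Fin (n * k)) (i : Fin (2 * t)) : ℤ :=
  ((π i.castSucc : ℕ) / n : ℤ) - ((π i.succ : ℕ) / n : ℤ)

/-- The entry-level Toeplitz increment: difference of within-block addresses. -/
def entryDiff {t n k : ℕ} (π : Fin (2 * t + 1) → Fin (n * k)) (i : Fin (2 * t)) : ℤ :=
  ((π i.castSucc : ℕ) % n : ℤ) - ((π i.succ : ℕ) % n : ℤ)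

/-- `Π*_{L,nk}(w)` for the `nk × nk` Toeplitz block matrix with (asymmetric)
Toeplitz blocks: circuits with `π(0) = π(2t)` such that matching letters of `w`
force the block-level and entry-level Toeplitz constraints to hold
simultaneously, with matching signs. -/
def tbtStar (t n k : ℕ) (w : Fin (2 * t) → ℕ) : Set (Fin (2 * t + 1) → Fin (n * k)) :=
  {π | π 0 = π (Fin.last (2 * t)) ∧ ∀ i j : Fin (2 * t), w i = w j →
    (blockDiff π i = blockDiff π j ∧ entryDiff π i = entryDiff π j) ∨
    (blockDiff π i = -blockDiff π j ∧ entryDiff π i = -entryDiff π j)}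

lemma my_ncard_prod {α β : Type*} (s : Set α) (t : Set β) :
    (s ×ˢ t).ncard = s.ncard * t.ncard := by
  rw [← Nat.card_coe_set_eq, ← Nat.card_coe_set_eq, ← Nat.card_coe_set_eq,
    ← Nat.card_prod]
  exact Nat.card_congr (Equiv.Set.prod s t)

lemma matched_mem {h : ℕ} {w : Fin h → ℕ} (hw : PairMatched w) {i j j' : Fin h}
    (hij : i ≠ j) (hji : w j = w i) (hj' : w j' = w i) : j' = i ∨ j' = j := by
  have hcard := hw i
  have hsub : ({i, j} : Finset (Fin h)) ⊆ Finset.univ.filter fun x => w x = w i := by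
    intro x hx
    simp only [Finset.mem_insert, Finset.mem_singleton] at hx
    rcases hx with rfl | rfl <;> simp [Finset.mem_filter, hji]
  have hc2 : ({i, j} : Finset (Fin h)).card = 2 := by
    rw [Finset.card_insert_of_notMem (by simpa using hij), Finset.card_singleton]
  have heq : ({i, j} : Finset (Fin h)) = Finset.univ.filter fun x => w x = w i :=
    Finset.eq_of_subset_of_card_le hsub (by rw [hcard, hc2])
  have : j' ∈ ({i, j} : Finset (Fin h)) := by rw [heq]; simp [hj']
  simpa using this


/-- Sandwich for the Toeplitz-block-Toeplitz circuit counts: for every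
pair-matched word `w` of length `2t` and all `n, k`,
`#Π*_{L_T,n,l₀}(w) · #Π*_{L_T,k,l₀}(w) ≤ #Π*_{L,nk}(w) ≤ #Π*_{L_T,n}(w) · #Π*_{L_T,k}(w)`,
where `l₀ = (−1,…,−1)`. -/
theorem tbtStar_sandwich (t n k : ℕ) (w : Fin (2 * t) → ℕ) (hw : PairMatched w) :
    (toepStarSigned t n w (fun _ => -1)).ncard *
        (toepStarSigned t k w (fun _ => -1)).ncard ≤ (tbtStar t n k w).ncard ∧
    (tbtStar t n k w).ncard ≤ (toepStar t n w).ncard * (toepStar t k w).ncard := by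
  constructor
  · -- lower bound
    rcases Nat.eq_zero_or_pos n with hn | hn
    · have : toepStarSigned t n w (fun _ => -1) = ∅ := by
        subst hn
        exact Set.eq_empty_iff_forall_notMem.mpr fun π _ => (π 0).elim0
      simp [this]
    rcases Nat.eq_zero_or_pos k with hk | hk
    · have : toepStarSigned t k w (fun _ => -1) = ∅ := by
        subst hk
        exact Set.eq_empty_iff_forall_notMem.mpr fun π _ => (π 0).elim0
      simp [this]
    set S₁ := toepStarSigned t n w (fun _ => -1)
    set S₂ := toepStarSigned t k w (fun _ => -1)
    have hbound : ∀ (a : Fin n) (b : Fin k), (b : ℕ) * n + (a : ℕ) < n * k := by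
      intro a b
      have h1 := a.isLt
      have h2 := b.isLt
      calc (b : ℕ) * n + (a : ℕ) < ((b : ℕ) + 1) * n := by rw [add_mul, one_mul]; omega
        _ ≤ k * n := Nat.mul_le_mul_right _ (by omega)
        _ = n * k := Nat.mul_comm _ _
    set Ψ : ((Fin (2 * t + 1) → Fin n) × (Fin (2 * t + 1) → Fin k)) →
        (Fin (2 * t + 1) → Fin (n * k)) :=
      fun p s => ⟨(p.2 s : ℕ) * n + (p.1 s : ℕ), hbound _ _⟩ with hΨ
    have hmod : ∀ p s, ((Ψ p s : ℕ)) % n = p.1 s := by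
      intro p s
      show ((p.2 s : ℕ) * n + (p.1 s : ℕ)) % n = p.1 s
      rw [Nat.add_mod, Nat.mul_mod_left]
      simp [Nat.mod_eq_of_lt (p.1 s).isLt]
    have hdiv : ∀ p s, ((Ψ p s : ℕ)) / n = p.2 s := by
      intro p s
      show ((p.2 s : ℕ) * n + (p.1 s : ℕ)) / n = p.2 s
      rw [Nat.mul_comm, Nat.mul_add_div hn, Nat.div_eq_of_lt (p.1 s).isLt, Nat.add_zero]
    have hinj : Function.Injective Ψ := by
      intro p q hpq
      have hval : ∀ s, (Ψ p s : ℕ) = (Ψ q s : ℕ) := fun s => by rw [hpq]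
      have h1 : p.1 = q.1 := by
        funext s
        have := hmod p s; have h' := hmod q s
        exact Fin.ext (by rw [← this, ← h', hval s])
      have h2 : p.2 = q.2 := by
        funext s
        have := hdiv p s; have h' := hdiv q s
        exact Fin.ext (by rw [← this, ← h', hval s])
      exact Prod.ext h1 h2
    have hmap : Set.MapsTo Ψ (S₁ ×ˢ S₂) (tbtStar t n k w) := by
      rintro ⟨π₁, π₂⟩ ⟨h₁, h₂⟩
      have hED : ∀ i : Fin (2 * t), entryDiff (Ψ (π₁, π₂)) i
          = (π₁ i.castSucc : ℤ) - (π₁ i.succ : ℤ) := by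
        intro i
        unfold entryDiff
        rw [← Int.natCast_mod, ← Int.natCast_mod, hmod (π₁, π₂) i.castSucc,
          hmod (π₁, π₂) i.succ]
      have hBD : ∀ i : Fin (2 * t), blockDiff (Ψ (π₁, π₂)) i
          = (π₂ i.castSucc : ℤ) - (π₂ i.succ : ℤ) := by
        intro i
        unfold blockDiff
        rw [← Int.natCast_div, ← Int.natCast_div, hdiv (π₁, π₂) i.castSucc,
          hdiv (π₁, π₂) i.succ]
      constructor
      · apply Fin.ext
        show (π₂ 0 : ℕ) * n + (π₁ 0 : ℕ) = (π₂ (Fin.last (2*t)) : ℕ) * n + (π₁ (Fin.last (2*t)) : ℕ)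
        have e1 : π₁ 0 = π₁ (Fin.last (2 * t)) := h₁.1.1
        have e2 : π₂ 0 = π₂ (Fin.last (2 * t)) := h₂.1.1
        rw [e1, e2]
      · intro i j hwij
        by_cases hij : i = j
        · subst hij; left; exact ⟨rfl, rfl⟩
        · rcases lt_or_gt_of_ne hij with hlt | hlt
          · have hgen : IsGen w i := by
              intro j' hj'
              rcases matched_mem hw hij hwij.symm hj' with rfl | rfl
              · exact le_refl _
              · exact le_of_lt hlt
            have e₁ := h₁.2 i j hgen hij hwij.symm
            have e₂ := h₂.2 i j hgen hij hwij.symm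
            right
            rw [hED i, hED j, hBD i, hBD j]
            constructor <;> [skip; skip] <;> simp only [neg_one_mul] at e₁ e₂ <;>
              [exact e₂; exact e₁]
          · have hgen : IsGen w j := by
              intro j' hj'
              rcases matched_mem hw (Ne.symm hij) hwij hj' with rfl | rfl
              · exact le_refl _
              · exact le_of_lt hlt
            have e₁ := h₁.2 j i hgen (Ne.symm hij) hwij
            have e₂ := h₂.2 j i hgen (Ne.symm hij) hwij
            right
            rw [hED i, hED j, hBD i, hBD j]
            simp only [neg_one_mul] at e₁ e₂
            omega
    calc S₁.ncard * S₂.ncard = (S₁ ×ˢ S₂).ncard := (my_ncard_prod _ _).symm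
      _ = (Ψ '' (S₁ ×ˢ S₂)).ncard := (Set.ncard_image_of_injective _ hinj).symm
      _ ≤ (tbtStar t n k w).ncard :=
          Set.ncard_le_ncard (Set.image_subset_iff.mpr fun p hp => hmap hp) (Set.toFinite _)
  · -- upper bound
    rcases Nat.eq_zero_or_pos n with hn | hn
    · have : tbtStar t n k w = ∅ := by
        refine Set.eq_empty_iff_forall_notMem.mpr fun π _ => ?_
        have := (π 0).isLt
        have h0 : n * k = 0 := by rw [hn, Nat.zero_mul]
        omega
      simp [this]
    rcases Nat.eq_zero_or_pos k with hk | hk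
    · have : tbtStar t n k w = ∅ := by
        refine Set.eq_empty_iff_forall_notMem.mpr fun π _ => ?_
        have := (π 0).isLt
        have h0 : n * k = 0 := by rw [hk, Nat.mul_zero]
        omega
      simp [this]
    set Φ : (Fin (2 * t + 1) → Fin (n * k)) →
        ((Fin (2 * t + 1) → Fin n) × (Fin (2 * t + 1) → Fin k)) :=
      fun π => (fun s => ⟨(π s : ℕ) % n, Nat.mod_lt _ hn⟩,
                fun s => ⟨(π s : ℕ) / n, by
                  have := (π s).isLt
                  exact Nat.div_lt_of_lt_mul (by omega)⟩) with hΦ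
    have hinj : Function.Injective Φ := by
      intro π ρ hpq
      funext s
      have h1 : ((Φ π).1 s : ℕ) = ((Φ ρ).1 s : ℕ) := by rw [hpq]
      have h2 : ((Φ π).2 s : ℕ) = ((Φ ρ).2 s : ℕ) := by rw [hpq]
      simp only [hΦ] at h1 h2
      refine Fin.ext ?_
      rw [← Nat.div_add_mod ((π s : ℕ)) n, ← Nat.div_add_mod ((ρ s : ℕ)) n, h1, h2]
    have hmap : Set.MapsTo Φ (tbtStar t n k w)
        ((toepStar t n w) ×ˢ (toepStar t k w)) := by
      intro π ⟨h0, hm⟩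
      constructor
      · constructor
        · exact Fin.ext (by show (π 0 : ℕ) % n = _; rw [h0])
        · intro i j hwij
          have hE : ∀ i : Fin (2 * t), ((Φ π).1 i.castSucc : ℤ) - ((Φ π).1 i.succ : ℤ)
              = entryDiff π i := by intro i; simp [hΦ, entryDiff, Int.natCast_mod]
          rw [hE i, hE j]
          rcases hm i j hwij with ⟨_, h⟩ | ⟨_, h⟩
          · rw [h]
          · rw [h, Int.natAbs_neg]
      · constructor
        · exact Fin.ext (by show (π 0 : ℕ) / n = _; rw [h0])
        · intro i j hwij
          have hB : ∀ i : Fin (2 * t), ((Φ π).2 i.castSucc : ℤ) - ((Φ π).2 i.succ : ℤ)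
              = blockDiff π i := by intro i; simp [hΦ, blockDiff, Int.natCast_div]
          rw [hB i, hB j]
          rcases hm i j hwij with ⟨h, _⟩ | ⟨h, _⟩
          · rw [h]
          · rw [h, Int.natAbs_neg]
    calc (tbtStar t n k w).ncard = (Φ '' (tbtStar t n k w)).ncard :=
          (Set.ncard_image_of_injective _ hinj).symm
      _ ≤ ((toepStar t n w) ×ˢ (toepStar t k w)).ncard :=
          Set.ncard_le_ncard (Set.image_subset_iff.mpr fun p hp => hmap hp) (Set.toFinite _)
      _ = (toepStar t n w).ncard * (toepStar t k w).ncard := my_ncard_prod _ _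
end
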